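/- arXiv:2303.12785 — 10 statements merged into one kernel-verified Lean document; each statement's English description precedes it below -/
import Mathlib

section
/- Exact gradient-pairing identity (first-order dynamics of log π under policy gradient): for the softmax policy π_θ with linear preferences over a finite action set A with kernel Θ(a,a') := ⟨ψ(a), ψ(a')⟩, for every a ∈ A and θ ∈ ℝ^P, ⟨∇_θ J(θ), ∇_θ log π_θ(a)⟩ = −(1/τ) Σ_{a'∈A} π_θ(a') ( log(π_θ(a')/π*(a')) − D_KL(π_θ‖π*) ) ( Θ(a,a') − Σ_{a''∈A} π_θ(a'') Θ(a'',a') ). -/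
open scoped RealInnerProductSpace

lemma hasFDerivAt_inner_right {E : Type*} [NormedAddCommGroup E] [InnerProductSpace ℝ E]
    (v θ : E) : HasFDerivAt (fun θ' : E => ⟪θ', v⟫) (innerSL ℝ v) θ := by
  have : (fun θ' : E => ⟪θ', v⟫) = fun θ' => ⟪v, θ'⟫ := funext fun θ' => real_inner_comm _ _
  rw [this]
  exact (innerSL ℝ v).hasFDerivAt

lemma hasFDerivAt_Ea {E : Type*} [NormedAddCommGroup E] [InnerProductSpace ℝ E]
    (τ : ℝ) (c : ℝ) (v θ : E) :
    HasFDerivAt (fun θ' : E => c * Real.exp (⟪θ', v⟫ / τ))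
      ((c * Real.exp (⟪θ, v⟫ / τ) / τ) • innerSL ℝ v) θ := by
  have h := (((hasFDerivAt_inner_right v θ).mul_const τ⁻¹).exp).const_mul c
  simp only [div_eq_mul_inv]
  refine h.congr_fderiv ?_
  ext w
  simp [ContinuousLinearMap.smul_apply]
  ring


set_option maxHeartbeats 1000000 in
/-- Exact gradient-pairing identity in the bandit case: for the
softmax policy with linear preferences and kernel `Θ(a,a') = ⟪ψ(a), ψ(a')⟫`,
`⟪∇_θ J(θ), ∇_θ log π_θ(a)⟫ = −(1/τ) Σ_{a'} π_θ(a')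
(log(π_θ(a')/π*(a')) − D_KL(π_θ‖π*)) (Θ(a,a') − Σ_{a''} π_θ(a'') Θ(a'',a'))`. -/
theorem bandit_gradient_pairing_identity {A : Type*} [Fintype A] [Nonempty A]
    (τ : ℝ) (hτ : 0 < τ)
    (pibar : A → ℝ) (hpibar_pos : ∀ a, 0 < pibar a) (hpibar_sum : ∑ a, pibar a = 1)
    (r : A → ℝ)
    (pistar : A → ℝ)
    (hpistar : ∀ a, pistar a =
      pibar a * Real.exp (r a / τ) / ∑ a', pibar a' * Real.exp (r a' / τ))
    (P : ℕ) (ψ : A → EuclideanSpace ℝ (Fin P))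
    (π : EuclideanSpace ℝ (Fin P) → A → ℝ)
    (hπ : ∀ θ a, π θ a =
      pibar a * Real.exp (⟪θ, ψ a⟫ / τ) / ∑ a', pibar a' * Real.exp (⟪θ, ψ a'⟫ / τ))
    (Θk : A → A → ℝ) (hΘk : ∀ a a', Θk a a' = ⟪ψ a, ψ a'⟫)
    (J : EuclideanSpace ℝ (Fin P) → ℝ)
    (hJ : ∀ θ, J θ = (∑ a, π θ a * r a) - τ * ∑ a, π θ a * Real.log (π θ a / pibar a))
    (θ : EuclideanSpace ℝ (Fin P)) (a : A) :
    ⟪gradient J θ, gradient (fun θ' => Real.log (π θ' a)) θ⟫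
      = -(1 / τ) * ∑ a', π θ a' *
          (Real.log (π θ a' / pistar a')
            - ∑ b, π θ b * Real.log (π θ b / pistar b)) *
          (Θk a a' - ∑ a'', π θ a'' * Θk a'' a') := by
  have hτ0 : τ ≠ 0 := hτ.ne'
  set Z : EuclideanSpace ℝ (Fin P) → ℝ :=
    fun θ' => ∑ a', pibar a' * Real.exp (⟪θ', ψ a'⟫ / τ) with hZdef
  have hZpos : ∀ θ', 0 < Z θ' :=
    fun θ' => Finset.sum_pos (fun i _ => mul_pos (hpibar_pos i) (Real.exp_pos _)) Finset.univ_nonempty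
  have hπ' : ∀ θ' b, π θ' b = pibar b * Real.exp (⟪θ', ψ b⟫ / τ) / Z θ' := hπ
  have hπpos : ∀ θ' b, 0 < π θ' b := by
    intro θ' b; rw [hπ' θ' b]
    exact div_pos (mul_pos (hpibar_pos b) (Real.exp_pos _)) (hZpos θ')
  have hπsum : ∀ θ', ∑ b, π θ' b = 1 := by
    intro θ'
    simp only [hπ' θ']
    rw [← Finset.sum_div, div_self (hZpos θ').ne']
  have hE : ∀ θ' b, pibar b * Real.exp (⟪θ', ψ b⟫ / τ) = π θ' b * Z θ' := by
    intro θ' b; rw [hπ' θ' b, div_mul_cancel₀ _ (hZpos θ').ne']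
  -- derivative of Z
  set DZ : EuclideanSpace ℝ (Fin P) →L[ℝ] ℝ :=
    ∑ b, (pibar b * Real.exp (⟪θ, ψ b⟫ / τ) / τ) • innerSL ℝ (ψ b) with hDZdef
  have hDZ : HasFDerivAt Z DZ θ := HasFDerivAt.fun_sum fun b _ => hasFDerivAt_Ea τ (pibar b) (ψ b) θ
  -- gradient of log π
  set gL : EuclideanSpace ℝ (Fin P) := τ⁻¹ • (ψ a - ∑ b, π θ b • ψ b) with hgLdef
  have hlogb : ∀ θ' b, Real.log (π θ' b / pibar b) = ⟪θ', ψ b⟫ / τ - Real.log (Z θ') := by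
    intro θ' b
    have h1 : π θ' b / pibar b = Real.exp (⟪θ', ψ b⟫ / τ) / Z θ' := by
      rw [hπ' θ' b, div_div, mul_comm (Z θ'), ← div_div,
        mul_div_cancel_left₀ _ (hpibar_pos b).ne']
    rw [h1, Real.log_div (Real.exp_pos _).ne' (hZpos θ').ne', Real.log_exp]
  have hgL : HasGradientAt (fun θ' => Real.log (π θ' a)) gL θ := by
    rw [hasGradientAt_iff_hasFDerivAt]
    have hfun : (fun θ' => Real.log (π θ' a))
        = fun θ' => Real.log (pibar a) + (⟪θ', ψ a⟫ * τ⁻¹ - Real.log (Z θ')) := by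
      funext θ'
      have h2 : Real.log (π θ' a) = Real.log (π θ' a / pibar a) + Real.log (pibar a) := by
        rw [Real.log_div (hπpos θ' a).ne' (hpibar_pos a).ne']; ring
      rw [h2, hlogb θ' a, div_eq_mul_inv]; ring
    rw [hfun]
    have h := (((hasFDerivAt_inner_right (ψ a) θ).mul_const τ⁻¹).sub
        (hDZ.log (hZpos θ).ne')).const_add (Real.log (pibar a))
    refine h.congr_fderiv ?_
    ext w
    simp only [hgLdef, InnerProductSpace.toDual_apply_apply, ContinuousLinearMap.add_apply,
      ContinuousLinearMap.sub_apply, ContinuousLinearMap.smul_apply, hDZdef,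
      ContinuousLinearMap.sum_apply, innerSL_apply_apply, inner_smul_left, inner_sub_left,
      sum_inner, RCLike.star_def, conj_trivial, smul_eq_mul]
    rw [mul_sub]
    congr 1
    rw [Finset.mul_sum, Finset.mul_sum]
    refine Finset.sum_congr rfl fun b _ => ?_
    rw [hE θ b]
    field_simp [hτ0, (hZpos θ).ne']
  -- rewrite J
  set N : EuclideanSpace ℝ (Fin P) → ℝ :=
    fun θ' => ∑ b, pibar b * Real.exp (⟪θ', ψ b⟫ / τ) * (r b - ⟪θ', ψ b⟫) with hNdef
  have hJfun : J = fun θ' => N θ' * (Z θ')⁻¹ + τ * Real.log (Z θ') := by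
    funext θ'
    rw [hJ θ']
    have hA : N θ' * (Z θ')⁻¹
        = (∑ b, π θ' b * r b) - ∑ b, π θ' b * ⟪θ', ψ b⟫ := by
      rw [hNdef]
      simp only [Finset.sum_mul]
      rw [← Finset.sum_sub_distrib]
      refine Finset.sum_congr rfl fun b _ => ?_
      rw [hπ' θ' b]
      field_simp
    have hB : ∑ b, π θ' b * Real.log (π θ' b / pibar b)
        = (∑ b, π θ' b * ⟪θ', ψ b⟫) * τ⁻¹ - Real.log (Z θ') := by
      have h2 : ∀ b ∈ Finset.univ, π θ' b * Real.log (π θ' b / pibar b)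
          = π θ' b * ⟪θ', ψ b⟫ * τ⁻¹ - Real.log (Z θ') * π θ' b := by
        intro b _
        rw [hlogb θ' b]
        field_simp
      rw [Finset.sum_congr rfl h2, Finset.sum_sub_distrib, ← Finset.sum_mul,
        ← Finset.mul_sum, hπsum θ', mul_one]
    rw [hA, hB]
    field_simp
    ring
  -- derivative of J
  have hDN : HasFDerivAt N (∑ b,
      ((pibar b * Real.exp (⟪θ, ψ b⟫ / τ)) • (-(innerSL ℝ (ψ b)))
        + (r b - ⟪θ, ψ b⟫) • ((pibar b * Real.exp (⟪θ, ψ b⟫ / τ) / τ) • innerSL ℝ (ψ b)))) θ :=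
    HasFDerivAt.fun_sum fun b _ =>
      (hasFDerivAt_Ea τ (pibar b) (ψ b) θ).mul ((hasFDerivAt_inner_right (ψ b) θ).const_sub (r b))
  have hZinv : HasFDerivAt (fun θ' => (Z θ')⁻¹) ((-((Z θ) ^ 2)⁻¹) • DZ) θ :=
    (hasDerivAt_inv (hZpos θ).ne').comp_hasFDerivAt θ hDZ
  have hDJ : HasFDerivAt J
      (N θ • ((-((Z θ) ^ 2)⁻¹) • DZ)
        + (Z θ)⁻¹ • (∑ b,
      ((pibar b * Real.exp (⟪θ, ψ b⟫ / τ)) • (-(innerSL ℝ (ψ b)))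
        + (r b - ⟪θ, ψ b⟫) • ((pibar b * Real.exp (⟪θ, ψ b⟫ / τ) / τ) • innerSL ℝ (ψ b))))
        + τ • ((Z θ)⁻¹ • DZ)) θ := by
    rw [hJfun]
    exact (hDN.mul hZinv).add ((hDZ.log (hZpos θ).ne').const_mul τ)
  have hgradJ := hasFDerivAt_iff_hasGradientAt.mp hDJ
  rw [hgradJ.gradient, hgL.gradient, ← InnerProductSpace.toDual_apply_apply,
    LinearIsometryEquiv.apply_symm_apply]
  simp only [ContinuousLinearMap.add_apply, ContinuousLinearMap.smul_apply,
    ContinuousLinearMap.sum_apply, ContinuousLinearMap.neg_apply, innerSL_apply_apply,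
    smul_eq_mul, hDZdef]
  -- abbreviations
  set V : ℝ := ∑ b, π θ b * (r b - ⟪θ, ψ b⟫) with hVdef
  have hNV : N θ = V * Z θ := by
    rw [hNdef, hVdef, Finset.sum_mul]
    refine Finset.sum_congr rfl fun b _ => ?_
    rw [hE θ b]
    ring
  have hK : ∀ b, ⟪ψ b, (gL : EuclideanSpace ℝ (Fin P))⟫
      = τ⁻¹ * (Θk a b - ∑ c, π θ c * Θk c b) := by
    intro b
    rw [hgLdef, real_inner_smul_right, inner_sub_right, inner_sum]
    simp only [real_inner_smul_right]
    have h1 : ∀ c ∈ Finset.univ, π θ c * ⟪ψ b, ψ c⟫ = π θ c * Θk c b := by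
      intro c _
      rw [hΘk, real_inner_comm]
    rw [Finset.sum_congr rfl h1, hΘk a b, real_inner_comm (ψ a) (ψ b)]
  simp only [hE θ, hNV, hK]
  -- RHS log expansion
  set Zs : ℝ := ∑ a', pibar a' * Real.exp (r a' / τ) with hZsdef
  have hZspos : 0 < Zs :=
    Finset.sum_pos (fun i _ => mul_pos (hpibar_pos i) (Real.exp_pos _)) Finset.univ_nonempty
  have hstarpos : ∀ b, 0 < pistar b := by
    intro b
    rw [hpistar b]
    exact div_pos (mul_pos (hpibar_pos b) (Real.exp_pos _)) hZspos
  have hlogstar : ∀ b, Real.log (π θ b / pistar b)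
      = ⟪θ, ψ b⟫ / τ - r b / τ + (Real.log Zs - Real.log (Z θ)) := by
    intro b
    rw [Real.log_div (hπpos θ b).ne' (hstarpos b).ne']
    have l1 : Real.log (π θ b) = Real.log (pibar b) + ⟪θ, ψ b⟫ / τ - Real.log (Z θ) := by
      have h := hlogb θ b
      rw [Real.log_div (hπpos θ b).ne' (hpibar_pos b).ne'] at h
      linarith
    have l2 : Real.log (pistar b) = Real.log (pibar b) + r b / τ - Real.log Zs := by
      rw [hpistar b,
        Real.log_div (mul_pos (hpibar_pos b) (Real.exp_pos _)).ne' hZspos.ne',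
        Real.log_mul (hpibar_pos b).ne' (Real.exp_pos _).ne', Real.log_exp]
    rw [l1, l2]
    ring
  have hKL : ∑ b, π θ b * Real.log (π θ b / pistar b)
      = -(V / τ) + (Real.log Zs - Real.log (Z θ)) := by
    have h1 : ∀ b ∈ Finset.univ, π θ b * Real.log (π θ b / pistar b)
        = (Real.log Zs - Real.log (Z θ)) * π θ b - (π θ b * (r b - ⟪θ, ψ b⟫)) / τ := by
      intro b _
      rw [hlogstar b]
      field_simp
      ring
    rw [Finset.sum_congr rfl h1, Finset.sum_sub_distrib, ← Finset.mul_sum, hπsum θ,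
      ← Finset.sum_div, ← hVdef, mul_one]
    ring
  rw [hKL]
  simp only [hlogstar]
  -- combine LHS sums into one sum
  simp only [Finset.mul_sum, ← Finset.sum_add_distrib]
  refine Finset.sum_congr rfl fun b _ => ?_
  field_simp [(hZpos θ).ne', hτ0]
  ring
end

section
/- Global optimality in the bandit case: suppose θ ∈ ℝ^P is a critical point of the objective, i.e. ∇_θ J(θ) = 0 (in particular this holds for any limit policy of ideal policy-gradient ascent). Define d ∈ ℝ^A by d_a := π_θ(a) ( log(π_θ(a)/π*(a)) − D_KL(π_θ‖π*) ). Then for every eigenvalue–eigenvector pair (λ, e) of the symmetric positive-semidefinite matrix M := (Θ(a,a'))_{a,a'∈A} with λ > 0, one has ⟨d, e⟩ = 0. In particular, if M is invertible (Θ strictly positive definite), then d = 0 and π_θ = π*. -/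
open scoped RealInnerProductSpace
open Matrix

private lemma bgo_alg1 (p E Z : ℝ) (hp : p ≠ 0) : p * E / Z / p = E / Z := by
  field_simp

private lemma bgo_alg2 (t p F L : ℝ) (ht : t ≠ 0) :
    t * (p * (F / t - L)) = p * F - p * (t * L) := by
  field_simp

private lemma bgo_alg6 (u z t s1 s2 T : ℝ) (ht : t ≠ 0) (hz : z ≠ 0)
    (h0 : u * (-(z ^ 2)⁻¹ * (s2 / t)) + z⁻¹ * (-s1 - s2) + t * (z⁻¹ * (s2 / t)) = 0)
    (hTu : T * (t * z) = -u) : s1 - T * s2 = 0 := by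
  have h1 : t ^ 2 * z ^ 3 * (s1 - T * s2) = 0 := by
    field_simp at h0
    linear_combination (-t * z ^ 2) * h0 - s2 * z ^ 2 * t * hTu
  exact (mul_eq_zero.mp h1).resolve_left
    (mul_ne_zero (pow_ne_zero _ ht) (pow_ne_zero _ hz))

private lemma bgo_alg5 (x z t F R : ℝ) (hz : z ≠ 0) (ht : t ≠ 0) :
    x / z * ((F - R) / t) * (t * z) = -(x * (R - F)) := by
  field_simp
  ring

/-- Global optimality in the bandit case. If `θ` is a critical
point of the entropy-regularized objective (`∇_θ J(θ) = 0`), then the vector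
`d_a = π_θ(a) (log(π_θ(a)/π*(a)) − D_KL(π_θ‖π*))` is orthogonal to every
eigenvector of the kernel matrix `M = (Θ(a,a'))` with positive eigenvalue; in
particular if `M` is invertible then `π_θ = π*`. -/
theorem bandit_global_optimality {A : Type*} [Fintype A] [Nonempty A] [DecidableEq A]
    (τ : ℝ) (hτ : 0 < τ)
    (pibar : A → ℝ) (hpibar_pos : ∀ a, 0 < pibar a) (hpibar_sum : ∑ a, pibar a = 1)
    (r : A → ℝ)
    (pistar : A → ℝ)
    (hpistar : ∀ a, pistar a =
      pibar a * Real.exp (r a / τ) / ∑ a', pibar a' * Real.exp (r a' / τ))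
    (P : ℕ) (ψ : A → EuclideanSpace ℝ (Fin P))
    (π : EuclideanSpace ℝ (Fin P) → A → ℝ)
    (hπ : ∀ θ a, π θ a =
      pibar a * Real.exp (⟪θ, ψ a⟫ / τ) / ∑ a', pibar a' * Real.exp (⟪θ, ψ a'⟫ / τ))
    (M : Matrix A A ℝ) (hM : ∀ a a', M a a' = ⟪ψ a, ψ a'⟫)
    (J : EuclideanSpace ℝ (Fin P) → ℝ)
    (hJ : ∀ θ, J θ = (∑ a, π θ a * r a) - τ * ∑ a, π θ a * Real.log (π θ a / pibar a))
    (θ : EuclideanSpace ℝ (Fin P))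
    (hcrit : gradient J θ = 0)
    (d : A → ℝ)
    (hd : ∀ a, d a = π θ a * (Real.log (π θ a / pistar a)
        - ∑ b, π θ b * Real.log (π θ b / pistar b))) :
    (∀ (lam : ℝ) (e : A → ℝ), e ≠ 0 → M.mulVec e = lam • e → 0 < lam →
        ∑ a, d a * e a = 0) ∧
      (IsUnit M.det → (d = 0 ∧ ∀ a, π θ a = pistar a)) := by
  classical
  have hτ' : (τ : ℝ) ≠ 0 := hτ.ne'
  set Zf : EuclideanSpace ℝ (Fin P) → ℝ :=
    fun θ' => ∑ a', pibar a' * Real.exp (⟪θ', ψ a'⟫ / τ) with hZf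
  set Uf : EuclideanSpace ℝ (Fin P) → ℝ :=
    fun θ' => ∑ a, pibar a * Real.exp (⟪θ', ψ a⟫ / τ) * (r a - ⟪θ', ψ a⟫) with hUf
  have hZapp : ∀ θ', Zf θ' = ∑ a', pibar a' * Real.exp (⟪θ', ψ a'⟫ / τ) := fun θ' => by
    rw [hZf]
  have hUapp : ∀ θ', Uf θ' = ∑ a, pibar a * Real.exp (⟪θ', ψ a⟫ / τ) * (r a - ⟪θ', ψ a⟫) :=
    fun θ' => by rw [hUf]
  have hZpos : ∀ θ', 0 < Zf θ' := by
    intro θ'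
    rw [hZapp]
    exact Finset.sum_pos (fun a _ => mul_pos (hpibar_pos a) (Real.exp_pos _))
      Finset.univ_nonempty
  have hπZ : ∀ θ' a, π θ' a = pibar a * Real.exp (⟪θ', ψ a⟫ / τ) / Zf θ' := by
    intro θ' a; rw [hZapp]; exact hπ θ' a
  have hπpos : ∀ θ' a, 0 < π θ' a := by
    intro θ' a
    rw [hπZ]
    exact div_pos (mul_pos (hpibar_pos a) (Real.exp_pos _)) (hZpos θ')
  have hπsum : ∀ θ', ∑ a, π θ' a = 1 := by
    intro θ'
    have h1 : ∑ a, π θ' a = (∑ a, pibar a * Real.exp (⟪θ', ψ a⟫ / τ)) / Zf θ' := by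
      rw [Finset.sum_div]
      exact Finset.sum_congr rfl fun a _ => hπZ θ' a
    rw [h1, ← hZapp, div_self (hZpos θ').ne']
  -- rewriting J
  have hJG : J = fun θ' => Uf θ' * (Zf θ')⁻¹ + τ * Real.log (Zf θ') := by
    funext θ'
    have hlogr : ∀ a, Real.log (π θ' a / pibar a) = ⟪θ', ψ a⟫ / τ - Real.log (Zf θ') := by
      intro a
      have h1 : π θ' a / pibar a = Real.exp (⟪θ', ψ a⟫ / τ) / Zf θ' := by
        rw [hπZ θ' a]
        exact bgo_alg1 _ _ _ (hpibar_pos a).ne' 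
      rw [h1, Real.log_div (Real.exp_ne_zero _) (hZpos θ').ne', Real.log_exp]
    have e1 : τ * ∑ a, π θ' a * Real.log (π θ' a / pibar a)
        = (∑ a, π θ' a * ⟪θ', ψ a⟫) - τ * Real.log (Zf θ') := by
      rw [Finset.mul_sum]
      have : ∀ a, τ * (π θ' a * Real.log (π θ' a / pibar a))
          = π θ' a * ⟪θ', ψ a⟫ - π θ' a * (τ * Real.log (Zf θ')) := by
        intro a
        rw [hlogr a]
        exact bgo_alg2 _ _ _ _ hτ'
      rw [Finset.sum_congr rfl fun a _ => this a, Finset.sum_sub_distrib,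
        ← Finset.sum_mul, hπsum θ', one_mul]
    have e2 : (∑ a, π θ' a * r a) - ∑ a, π θ' a * ⟪θ', ψ a⟫ = Uf θ' * (Zf θ')⁻¹ := by
      rw [← Finset.sum_sub_distrib, hUapp, Finset.sum_mul]
      refine Finset.sum_congr rfl fun a _ => ?_
      rw [hπZ θ' a]
      ring
    rw [hJ θ', e1]
    linear_combination e2
  -- derivative data
  set n : A → ℝ := fun a => pibar a * Real.exp (⟪θ, ψ a⟫ / τ) with hn
  have hnapp : ∀ a, n a = pibar a * Real.exp (⟪θ, ψ a⟫ / τ) := fun a => by rw [hn]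
  have hinner : ∀ a, HasFDerivAt (fun θ' : EuclideanSpace ℝ (Fin P) => ⟪θ', ψ a⟫)
      (innerSL ℝ (ψ a)) θ := by
    intro a
    have h := (innerSL ℝ (ψ a)).hasFDerivAt (x := θ)
    have he : (⇑(innerSL ℝ (ψ a)) : EuclideanSpace ℝ (Fin P) → ℝ)
        = fun θ' => ⟪θ', ψ a⟫ := funext fun y => by
      simp only [innerSL_apply_apply]
      exact real_inner_comm _ _
    rwa [he] at h
  have hdivτ : ∀ a, HasFDerivAt (fun θ' : EuclideanSpace ℝ (Fin P) => ⟪θ', ψ a⟫ / τ)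
      (τ⁻¹ • innerSL ℝ (ψ a)) θ := by
    intro a
    simpa [div_eq_mul_inv] using (hinner a).mul_const τ⁻¹
  have hN : ∀ a, HasFDerivAt (fun θ' : EuclideanSpace ℝ (Fin P) =>
      pibar a * Real.exp (⟪θ', ψ a⟫ / τ)) ((n a / τ) • innerSL ℝ (ψ a)) θ := by
    intro a
    have h3 := ((hdivτ a).exp).const_mul (pibar a)
    refine h3.congr_fderiv ?_
    rw [hnapp]
    ext v
    simp only [ContinuousLinearMap.smul_apply, innerSL_apply_apply, smul_eq_mul]
    ring
  have hZd : HasFDerivAt Zf (∑ a, (n a / τ) • innerSL ℝ (ψ a)) θ := by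
    rw [hZf]
    exact HasFDerivAt.fun_sum fun a _ => hN a
  have hUd : HasFDerivAt Uf
      (∑ a, (n a / τ * (r a - ⟪θ, ψ a⟫) - n a) • innerSL ℝ (ψ a)) θ := by
    rw [hUf]
    refine HasFDerivAt.fun_sum fun a _ => ?_
    have h4 : HasFDerivAt (fun θ' : EuclideanSpace ℝ (Fin P) => r a - ⟪θ', ψ a⟫)
        (-(innerSL ℝ (ψ a))) θ := (hinner a).const_sub (r a)
    have h5 := (hN a).mul h4
    refine h5.congr_fderiv ?_
    rw [hnapp]
    ext v
    simp only [ContinuousLinearMap.smul_apply, ContinuousLinearMap.add_apply,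
      ContinuousLinearMap.neg_apply, innerSL_apply_apply, smul_eq_mul]
    ring
  set LZ : EuclideanSpace ℝ (Fin P) →L[ℝ] ℝ := ∑ a, (n a / τ) • innerSL ℝ (ψ a) with hLZ
  set LU : EuclideanSpace ℝ (Fin P) →L[ℝ] ℝ :=
    ∑ a, (n a / τ * (r a - ⟪θ, ψ a⟫) - n a) • innerSL ℝ (ψ a) with hLU
  have hZinv : HasFDerivAt (fun θ' => (Zf θ')⁻¹) ((-(Zf θ ^ 2)⁻¹) • LZ) θ :=
    (hasDerivAt_inv (hZpos θ).ne').comp_hasFDerivAt θ hZd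
  have hlogd : HasFDerivAt (fun θ' => τ * Real.log (Zf θ')) (τ • ((Zf θ)⁻¹ • LZ)) θ :=
    (hZd.log (hZpos θ).ne').const_mul τ
  have hJd : HasFDerivAt J
      ((Uf θ • ((-(Zf θ ^ 2)⁻¹) • LZ) + (Zf θ)⁻¹ • LU) + τ • ((Zf θ)⁻¹ • LZ)) θ := by
    rw [hJG]
    exact (hUd.mul hZinv).add hlogd
  have hfd : fderiv ℝ J θ = 0 := by
    unfold gradient at hcrit
    exact ((InnerProductSpace.toDual ℝ _).symm.map_eq_zero_iff).mp hcrit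
  have hL0 : (Uf θ • ((-(Zf θ ^ 2)⁻¹) • LZ) + (Zf θ)⁻¹ • LU) + τ • ((Zf θ)⁻¹ • LZ) = 0 :=
    hJd.fderiv.symm.trans hfd
  -- the score vector in algebraic form
  set t : A → ℝ := fun a => (⟪θ, ψ a⟫ - r a) / τ with ht
  have htapp : ∀ a, t a = (⟪θ, ψ a⟫ - r a) / τ := fun a => by rw [ht]
  set T : ℝ := ∑ b, π θ b * t b with hT
  set ZR : ℝ := ∑ a', pibar a' * Real.exp (r a' / τ) with hZR
  have hZRpos : 0 < ZR := by
    rw [hZR]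
    exact Finset.sum_pos (fun a _ => mul_pos (hpibar_pos a) (Real.exp_pos _))
      Finset.univ_nonempty
  have hpistar' : ∀ a, pistar a = pibar a * Real.exp (r a / τ) / ZR := by
    intro a; rw [hZR]; exact hpistar a
  have hpistarpos : ∀ a, 0 < pistar a := by
    intro a
    rw [hpistar']
    exact div_pos (mul_pos (hpibar_pos a) (Real.exp_pos _)) hZRpos
  have hlogratio : ∀ a, Real.log (π θ a / pistar a)
      = t a + (Real.log ZR - Real.log (Zf θ)) := by
    intro a
    rw [Real.log_div (hπpos θ a).ne' (hpistarpos a).ne', hπZ θ a, hpistar' a,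
      Real.log_div (mul_pos (hpibar_pos a) (Real.exp_pos _)).ne' (hZpos θ).ne',
      Real.log_div (mul_pos (hpibar_pos a) (Real.exp_pos _)).ne' hZRpos.ne',
      Real.log_mul (hpibar_pos a).ne' (Real.exp_ne_zero _),
      Real.log_mul (hpibar_pos a).ne' (Real.exp_ne_zero _),
      Real.log_exp, Real.log_exp, htapp]
    ring
  have hd2 : ∀ a, d a = π θ a * (t a - T) := by
    intro a
    have hsplit : ∑ b, π θ b * Real.log (π θ b / pistar b)
        = T + (Real.log ZR - Real.log (Zf θ)) := by
      rw [Finset.sum_congr rfl fun b _ => by rw [hlogratio b]]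
      simp only [mul_add]
      rw [Finset.sum_add_distrib, ← Finset.sum_mul, hπsum θ, one_mul, hT]
    rw [hd a, hsplit, hlogratio a]
    ring
  have hTu : T * (τ * Zf θ) = -(Uf θ) := by
    rw [hT, hUapp, Finset.sum_mul, ← Finset.sum_neg_distrib]
    refine Finset.sum_congr rfl fun b _ => ?_
    rw [hπZ θ b, htapp b]
    exact bgo_alg5 _ _ _ _ _ (hZpos θ).ne' hτ' 
  -- the key orthogonality relation
  have key : ∀ v : EuclideanSpace ℝ (Fin P), ∑ a, d a * ⟪ψ a, v⟫ = 0 := by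
    intro v
    have h0 : ((Uf θ • ((-(Zf θ ^ 2)⁻¹) • LZ) + (Zf θ)⁻¹ • LU) + τ • ((Zf θ)⁻¹ • LZ)) v
        = 0 := by rw [hL0]; exact ContinuousLinearMap.zero_apply v
    simp only [ContinuousLinearMap.add_apply, ContinuousLinearMap.smul_apply, hLZ, hLU,
      ContinuousLinearMap.sum_apply, innerSL_apply_apply, smul_eq_mul] at h0
    set S1 : ℝ := ∑ a, n a * t a * ⟪ψ a, v⟫ with hS1
    set S2 : ℝ := ∑ a, n a * ⟪ψ a, v⟫ with hS2
    have e1 : ∑ a, n a / τ * ⟪ψ a, v⟫ = S2 / τ := by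
      rw [hS2, Finset.sum_div]
      exact Finset.sum_congr rfl fun a _ => by ring
    have e2 : ∑ a, (n a / τ * (r a - ⟪θ, ψ a⟫) - n a) * ⟪ψ a, v⟫ = -S1 - S2 := by
      have hterm : ∀ a, (n a / τ * (r a - ⟪θ, ψ a⟫) - n a) * ⟪ψ a, v⟫
          = -(n a * t a * ⟪ψ a, v⟫) - n a * ⟪ψ a, v⟫ := by
        intro a
        rw [htapp a]
        ring
      rw [Finset.sum_congr rfl fun a _ => hterm a, Finset.sum_sub_distrib,
        Finset.sum_neg_distrib, hS1, hS2]
    rw [e1, e2] at h0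
    have e3 : ∑ a, d a * ⟪ψ a, v⟫ = (S1 - T * S2) / Zf θ := by
      have hterm : ∀ a, d a * ⟪ψ a, v⟫
          = (n a * t a * ⟪ψ a, v⟫ - T * (n a * ⟪ψ a, v⟫)) / Zf θ := by
        intro a
        rw [hd2 a, hπZ θ a, ← hnapp a]
        ring
      rw [Finset.sum_congr rfl fun a _ => hterm a, ← Finset.sum_div,
        Finset.sum_sub_distrib, ← Finset.mul_sum, hS1, hS2]
    rw [e3]
    have hz : Zf θ ≠ 0 := (hZpos θ).ne'
    have hnum : S1 - T * S2 = 0 := by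
      clear_value S1 S2
      exact bgo_alg6 _ _ _ _ _ _ hτ' hz h0 hTu
    rw [hnum, zero_div]
  constructor
  · -- eigenvector part
    intro lam e hne heig hlam
    have h1 : ∑ a, d a * Matrix.mulVec M e a = 0 := by
      have hk := key (∑ a', e a' • ψ a')
      simp only [inner_sum, real_inner_smul_right, Finset.mul_sum] at hk
      have : ∑ a, d a * Matrix.mulVec M e a
          = ∑ a, ∑ a', d a * (e a' * ⟪ψ a, ψ a'⟫) := by
        refine Finset.sum_congr rfl fun a _ => ?_
        simp only [Matrix.mulVec, dotProduct, hM, Finset.mul_sum]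
        exact Finset.sum_congr rfl fun a' _ => by ring
      exact this.trans hk
    rw [heig] at h1
    have h2 : ∑ a, d a * (lam • e) a = lam * ∑ a, d a * e a := by
      rw [Finset.mul_sum]
      exact Finset.sum_congr rfl fun a _ => by simp [smul_eq_mul]; ring
    rw [h2] at h1
    exact (mul_eq_zero.mp h1).resolve_left hlam.ne'
  · -- invertible part
    intro hdet
    have hvm : Matrix.vecMul d M = 0 := by
      funext a0
      have hk := key (ψ a0)
      simp only [Matrix.vecMul, dotProduct, hM, Pi.zero_apply]
      exact hk
    have hd0 : d = 0 := by
      have h2 : d ᵥ* (M * M⁻¹) = (0 : A → ℝ) ᵥ* M⁻¹ := by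
        rw [← Matrix.vecMul_vecMul, hvm]
      rwa [Matrix.mul_nonsing_inv M hdet, Matrix.vecMul_one, Matrix.zero_vecMul] at h2
    refine ⟨hd0, ?_⟩
    have hpistarsum : ∑ a, pistar a = 1 := by
      have h1 : ∑ a, pistar a = (∑ a, pibar a * Real.exp (r a / τ)) / ZR := by
        rw [Finset.sum_div]
        exact Finset.sum_congr rfl fun a _ => hpistar' a
      rw [h1, hZR, div_self]
      rw [← hZR]
      exact hZRpos.ne'
    set K : ℝ := ∑ b, π θ b * Real.log (π θ b / pistar b) with hK
    have hlogK : ∀ a, Real.log (π θ a / pistar a) = K := by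
      intro a
      have hda : d a = 0 := congrFun hd0 a
      rw [hd a] at hda
      have := (mul_eq_zero.mp hda).resolve_left (hπpos θ a).ne'
      linarith [this]
    have hratio : ∀ a, π θ a = Real.exp K * pistar a := by
      intro a
      have h3 : π θ a / pistar a = Real.exp K := by
        rw [← hlogK a, Real.exp_log (div_pos (hπpos θ a) (hpistarpos a))]
      rw [div_eq_iff (hpistarpos a).ne'] at h3
      exact h3
    have hexpK : Real.exp K = 1 := by
      have h4 := hπsum θ
      rw [Finset.sum_congr rfl fun a _ => hratio a, ← Finset.mul_sum, hpistarsum,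
        mul_one] at h4
      exact h4
    intro a
    rw [hratio a, hexpK, one_mul]
end

section
/- Optimality of the recursively defined Boltzmann extended policy: for every extended policy π = (π^{(1)},…,π^{(n)}) of horizon n whose component policies are everywhere positive, and for every state s ∈ S and every 1 ≤ i ≤ n, V^{(i)}_π(s) ≤ V*^{(i)}(s). -/
open Finset

/-- Gibbs variational bound: for any positive policy `w` with total mass 1 and
positive reference `μ`, the entropy-regularized value is at most the log-partition. -/
lemma gibbs_bound {A : Type*} [Fintype A] (τ : ℝ) (hτ : 0 < τ)
    (w q μ : A → ℝ) (hw : ∀ a, 0 < w a) (hwsum : ∑ a, w a = 1)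
    (hμ : ∀ a, 0 < μ a) :
    ∑ a, w a * (q a - τ * Real.log (w a / μ a)) ≤
      τ * Real.log (∑ a, μ a * Real.exp (q a / τ)) := by
  set x : A → ℝ := fun a => μ a * Real.exp (q a / τ) / w a with hx
  have hxpos : ∀ a, 0 < x a := fun a =>
    div_pos (mul_pos (hμ a) (Real.exp_pos _)) (hw a)
  have key : ∀ a, w a * (q a - τ * Real.log (w a / μ a)) = τ * (w a * Real.log (x a)) := by
    intro a
    have : Real.log (x a) = Real.log (μ a) + q a / τ - Real.log (w a) := by
      rw [hx]
      rw [Real.log_div (mul_pos (hμ a) (Real.exp_pos _)).ne' (hw a).ne',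
        Real.log_mul (hμ a).ne' (Real.exp_pos _).ne', Real.log_exp]
    rw [this, Real.log_div (hw a).ne' (hμ a).ne']
    have hq : τ * (q a / τ) = q a := mul_div_cancel₀ _ hτ.ne'
    linear_combination -(w a) * hq
  rw [Finset.sum_congr rfl fun a _ => key a, ← Finset.mul_sum]
  have jensen : ∑ a, w a * Real.log (x a) ≤ Real.log (∑ a, w a * x a) := by
    have := (strictConcaveOn_log_Ioi.concaveOn).le_map_sum
      (t := Finset.univ) (w := w) (p := x)
      (fun a _ => (hw a).le) hwsum (fun a _ => hxpos a)
    simpa [smul_eq_mul] using this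
  have hsum : ∑ a, w a * x a = ∑ a, μ a * Real.exp (q a / τ) := by
    apply Finset.sum_congr rfl
    intro a _
    rw [hx]
    exact mul_div_cancel₀ _ (hw a).ne'
  rw [hsum] at jensen
  exact mul_le_mul_of_nonneg_left jensen hτ.le

/-- Optimality of the recursively defined Boltzmann extended
policy: for every extended policy `π = (π^{(1)},…,π^{(n)})` with everywhere
positive components, every state `s` and every `1 ≤ i ≤ n`,
`V^{(i)}_π(s) ≤ V*^{(i)}(s)`. -/
theorem extended_policy_value_le_optimal
    {S A : Type*} [Fintype S] [Fintype A] [Nonempty S] [Nonempty A]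
    (τ : ℝ) (hτ : 0 < τ)
    (pibar : S → A → ℝ) (hpibar_pos : ∀ s a, 0 < pibar s a)
    (hpibar_sum : ∀ s, ∑ a, pibar s a = 1)
    (r : A → S → ℝ)
    (p : S → A → S → ℝ) (hp_nonneg : ∀ s a s', 0 ≤ p s a s')
    (hp_sum : ∀ s a, ∑ s', p s a s' = 1)
    (n : ℕ)
    -- the extended policy `π`, with `π i` its `i`-step component
    (π : ℕ → S → A → ℝ)
    (hπ_pos : ∀ i s a, 0 < π i s a) (hπ_sum : ∀ i s, ∑ a, π i s a = 1)
    -- value and Q functions of `π`, defined recursively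
    (V : ℕ → S → ℝ) (Q : ℕ → A → S → ℝ)
    (hV0 : ∀ s, V 0 s = 0)
    (hQ : ∀ i a s, Q (i + 1) a s = r a s + ∑ s', p s a s' * V i s')
    (hV : ∀ i s, V (i + 1) s = ∑ a, π (i + 1) s a *
      (Q (i + 1) a s - τ * Real.log (π (i + 1) s a / pibar s a)))
    -- optimal extended policy and its value and Q functions, defined recursively
    (Vstar : ℕ → S → ℝ) (Qstar : ℕ → A → S → ℝ) (pistar : ℕ → S → A → ℝ)
    (hVstar0 : ∀ s, Vstar 0 s = 0)
    (hQstar : ∀ i a s, Qstar (i + 1) a s = r a s + ∑ s', p s a s' * Vstar i s')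
    (hpistar : ∀ i s a, pistar (i + 1) s a =
      pibar s a * Real.exp (Qstar (i + 1) a s / τ) /
        ∑ a', pibar s a' * Real.exp (Qstar (i + 1) a' s / τ))
    (hVstar : ∀ i s, Vstar (i + 1) s = ∑ a, pistar (i + 1) s a *
      (Qstar (i + 1) a s - τ * Real.log (pistar (i + 1) s a / pibar s a)))
    (i : ℕ) (hi : 1 ≤ i) (hin : i ≤ n) (s : S) :
    V i s ≤ Vstar i s := by
  clear hi hin
  induction i generalizing s with
  | zero => rw [hV0, hVstar0]
  | succ i ih =>
    -- positivity of the partition function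
    have hZpos : ∀ s, 0 < ∑ a', pibar s a' * Real.exp (Qstar (i + 1) a' s / τ) := by
      intro s
      exact Finset.sum_pos (fun a _ => mul_pos (hpibar_pos s a) (Real.exp_pos _))
        Finset.univ_nonempty
    -- Vstar (i+1) s equals the log-partition value
    have hVstar_eq : Vstar (i + 1) s =
        τ * Real.log (∑ a', pibar s a' * Real.exp (Qstar (i + 1) a' s / τ)) := by
      set Z := ∑ a', pibar s a' * Real.exp (Qstar (i + 1) a' s / τ) with hZ
      have hstar_sum : ∑ a, pistar (i + 1) s a = 1 := by
        rw [Finset.sum_congr rfl fun a _ => hpistar i s a, ← Finset.sum_div, ← hZ,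
          div_self (ne_of_gt (hZpos s))]
      have hterm : ∀ a, pistar (i + 1) s a *
          (Qstar (i + 1) a s - τ * Real.log (pistar (i + 1) s a / pibar s a)) =
          pistar (i + 1) s a * (τ * Real.log Z) := by
        intro a
        congr 1
        have hps : pistar (i + 1) s a / pibar s a = Real.exp (Qstar (i + 1) a s / τ) / Z := by
          rw [hpistar i s a, ← hZ, div_right_comm,
            mul_div_cancel_left₀ _ (hpibar_pos s a).ne']
        rw [hps, Real.log_div (ne_of_gt (Real.exp_pos _)) (ne_of_gt (hZpos s)), Real.log_exp]
        field_simp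
        rw [hZ]
        ring
      rw [hVstar, Finset.sum_congr rfl fun a _ => hterm a, ← Finset.sum_mul, hstar_sum, one_mul]
    -- Q ≤ Qstar pointwise
    have hQle : ∀ a, Q (i + 1) a s ≤ Qstar (i + 1) a s := by
      intro a
      rw [hQ, hQstar]
      gcongr with s' _
      · exact hp_nonneg s a s'
      · exact ih s'
    calc V (i + 1) s
        = ∑ a, π (i + 1) s a *
            (Q (i + 1) a s - τ * Real.log (π (i + 1) s a / pibar s a)) := hV i s
      _ ≤ ∑ a, π (i + 1) s a *
            (Qstar (i + 1) a s - τ * Real.log (π (i + 1) s a / pibar s a)) := by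
          gcongr with a _
          · exact (hπ_pos (i + 1) s a).le
          · exact hQle a
      _ ≤ τ * Real.log (∑ a', pibar s a' * Real.exp (Qstar (i + 1) a' s / τ)) :=
          gibbs_bound τ hτ (π (i + 1) s) (fun a => Qstar (i + 1) a s) (pibar s)
            (hπ_pos (i + 1) s) (hπ_sum (i + 1) s) (hpibar_pos s)
      _ = Vstar (i + 1) s := hVstar_eq.symm
end

section
/- Log-partition expression of the optimal value function: for every state s ∈ S and every 1 ≤ i ≤ n, V*^{(i)}(s) = τ log ( Σ_{a∈A} π̄(a|s) exp( Q*^{(i)}(a,s)/τ ) ). -/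
/-- Log-partition expression of the optimal value function:
for every state `s` and `1 ≤ i ≤ n`,
`V*^{(i)}(s) = τ log(Σ_a π̄(a|s) exp(Q*^{(i)}(a,s)/τ))`. -/
theorem optimal_value_log_partition
    {S A : Type*} [Fintype S] [Fintype A] [Nonempty S] [Nonempty A]
    (τ : ℝ) (hτ : 0 < τ)
    (pibar : S → A → ℝ) (hpibar_pos : ∀ s a, 0 < pibar s a)
    (hpibar_sum : ∀ s, ∑ a, pibar s a = 1)
    (r : A → S → ℝ)
    (p : S → A → S → ℝ) (hp_nonneg : ∀ s a s', 0 ≤ p s a s')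
    (hp_sum : ∀ s a, ∑ s', p s a s' = 1)
    (n : ℕ)
    -- optimal extended policy and its value and Q functions, defined recursively
    (Vstar : ℕ → S → ℝ) (Qstar : ℕ → A → S → ℝ) (pistar : ℕ → S → A → ℝ)
    (hVstar0 : ∀ s, Vstar 0 s = 0)
    (hQstar : ∀ i a s, Qstar (i + 1) a s = r a s + ∑ s', p s a s' * Vstar i s')
    (hpistar : ∀ i s a, pistar (i + 1) s a =
      pibar s a * Real.exp (Qstar (i + 1) a s / τ) /
        ∑ a', pibar s a' * Real.exp (Qstar (i + 1) a' s / τ))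
    (hVstar : ∀ i s, Vstar (i + 1) s = ∑ a, pistar (i + 1) s a *
      (Qstar (i + 1) a s - τ * Real.log (pistar (i + 1) s a / pibar s a)))
    (i : ℕ) (hi : 1 ≤ i) (hin : i ≤ n) (s : S) :
    Vstar i s = τ * Real.log (∑ a, pibar s a * Real.exp (Qstar i a s / τ)) := by
  obtain ⟨j, rfl⟩ : ∃ j, i = j + 1 := ⟨i - 1, (Nat.succ_pred_eq_of_pos hi).symm⟩
  set Z : ℝ := ∑ a, pibar s a * Real.exp (Qstar (j + 1) a s / τ) with hZ
  have hZpos : 0 < Z := Finset.sum_pos (fun a _ => mul_pos (hpibar_pos s a) (Real.exp_pos _)) Finset.univ_nonempty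
  have hterm : ∀ a, pistar (j + 1) s a * (Qstar (j + 1) a s - τ * Real.log (pistar (j + 1) s a / pibar s a)) = pistar (j + 1) s a * (τ * Real.log Z) := by
    intro a
    congr 1
    have hpi : pistar (j + 1) s a = pibar s a * Real.exp (Qstar (j + 1) a s / τ) / Z := hpistar j s a
    have h1 : pistar (j + 1) s a / pibar s a = Real.exp (Qstar (j + 1) a s / τ) / Z := by
      rw [hpi, div_div, mul_comm Z (pibar s a), mul_div_mul_left _ _ (ne_of_gt (hpibar_pos s a))]
    have h2 : τ * (Qstar (j + 1) a s / τ) = Qstar (j + 1) a s := by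
      field_simp
    rw [h1, Real.log_div (Real.exp_ne_zero _) (ne_of_gt hZpos), Real.log_exp, mul_sub, h2,
      sub_sub_cancel]
  have hsum1 : ∑ a, pistar (j + 1) s a = 1 := by
    have : ∑ a, pistar (j + 1) s a = (∑ a, pibar s a * Real.exp (Qstar (j + 1) a s / τ)) / Z := by
      rw [Finset.sum_div]
      exact Finset.sum_congr rfl fun a _ => hpistar j s a
    rw [this, ← hZ, div_self (ne_of_gt hZpos)]
  rw [hVstar j s]
  calc (∑ a, pistar (j + 1) s a * (Qstar (j + 1) a s - τ * Real.log (pistar (j + 1) s a / pibar s a)))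
      = ∑ a, pistar (j + 1) s a * (τ * Real.log Z) := Finset.sum_congr rfl fun a _ => hterm a
    _ = (∑ a, pistar (j + 1) s a) * (τ * Real.log Z) := by rw [Finset.sum_mul]
    _ = τ * Real.log Z := by rw [hsum1, one_mul]
end

section
/- Uniqueness of the optimal extended policy: assume the transition kernel is everywhere positive, i.e. p(s,a,s') > 0 for all s, a, s'. If an extended policy π = (π^{(1)},…,π^{(n)}) with everywhere positive components satisfies J_n(π) = J_n(π*), where J_n(π) := Σ_{s∈S} V^{(n)}_π(s), then π^{(i)}(a|s) = π*^{(i)}(a|s) for all 1 ≤ i ≤ n, a ∈ A, s ∈ S. Consequently π* is the unique maximizer of J_n over extended policies of horizon n. -/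
open Finset

lemma gibbs_aux {A : Type*} [Fintype A] (q g : A → ℝ)
    (hq : ∀ a, 0 < q a) (hg : ∀ a, 0 < g a)
    (hqs : ∑ a, q a = 1) (hgs : ∑ a, g a = 1) :
    (∑ a, q a * Real.log (g a / q a) ≤ 0) ∧
    (∑ a, q a * Real.log (g a / q a) = 0 → ∀ a, q a = g a) := by
  have hterm : ∀ a, q a * Real.log (g a / q a) ≤ g a - q a := by
    intro a
    have h1 : Real.log (g a / q a) ≤ g a / q a - 1 :=
      Real.log_le_sub_one_of_pos (div_pos (hg a) (hq a))
    calc q a * Real.log (g a / q a) ≤ q a * (g a / q a - 1) :=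
          mul_le_mul_of_nonneg_left h1 (hq a).le
      _ = g a - q a := by field_simp [(hq a).ne']
  have hsum : ∑ a, q a * Real.log (g a / q a) ≤ ∑ a, (g a - q a) :=
    Finset.sum_le_sum fun a _ => hterm a
  have hz : ∑ a, (g a - q a) = 0 := by rw [Finset.sum_sub_distrib, hqs, hgs]; ring
  refine ⟨by linarith, ?_⟩
  intro heq a
  by_contra hne
  have hne1 : g a / q a ≠ 1 := by
    intro h
    exact hne ((div_eq_one_iff_eq (hq a).ne').mp h).symm
  have hlt : q a * Real.log (g a / q a) < g a - q a := by
    have h1 : Real.log (g a / q a) < g a / q a - 1 :=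
      Real.log_lt_sub_one_of_pos (div_pos (hg a) (hq a)) hne1
    calc q a * Real.log (g a / q a) < q a * (g a / q a - 1) :=
          mul_lt_mul_of_pos_left h1 (hq a)
      _ = g a - q a := by field_simp [(hq a).ne']
  have : ∑ b, q b * Real.log (g b / q b) < ∑ b, (g b - q b) :=
    Finset.sum_lt_sum (fun b _ => hterm b) ⟨a, Finset.mem_univ a, hlt⟩
  linarith

lemma value_identity {A : Type*} [Fintype A] [Nonempty A] (τ : ℝ) (hτ : 0 < τ)
    (w : A → ℝ) (hw : ∀ a, 0 < w a)
    (x : A → ℝ) (q : A → ℝ) (hq : ∀ a, 0 < q a) (hqs : ∑ a, q a = 1) :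
    ∑ a, q a * (x a - τ * Real.log (q a / w a)) =
      τ * (∑ a, q a * Real.log
          ((w a * Real.exp (x a / τ) / (∑ a', w a' * Real.exp (x a' / τ))) / q a))
      + τ * Real.log (∑ a', w a' * Real.exp (x a' / τ)) := by
  set Z := ∑ a', w a' * Real.exp (x a' / τ) with hZdef
  have hZ : 0 < Z := Finset.sum_pos (fun a _ => mul_pos (hw a) (Real.exp_pos _))
    Finset.univ_nonempty
  have hterm : ∀ a, q a * (x a - τ * Real.log (q a / w a)) =
      τ * (q a * Real.log ((w a * Real.exp (x a / τ) / Z) / q a)) + (τ * Real.log Z) * q a := by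
    intro a
    have e1 : Real.log ((w a * Real.exp (x a / τ) / Z) / q a)
        = Real.log (w a) + x a / τ - Real.log Z - Real.log (q a) := by
      rw [Real.log_div (div_pos (mul_pos (hw a) (Real.exp_pos _)) hZ).ne' (hq a).ne',
          Real.log_div (mul_pos (hw a) (Real.exp_pos _)).ne' hZ.ne',
          Real.log_mul (hw a).ne' (Real.exp_pos _).ne', Real.log_exp]
    have e2 : Real.log (q a / w a) = Real.log (q a) - Real.log (w a) :=
      Real.log_div (hq a).ne' (hw a).ne'
    rw [e1, e2]
    field_simp
    ring
  rw [Finset.sum_congr rfl fun a _ => hterm a, Finset.sum_add_distrib,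
    ← Finset.mul_sum, ← Finset.mul_sum, hqs, mul_one]

lemma softmax_sum_one {A : Type*} [Fintype A] [Nonempty A] (τ : ℝ)
    (w : A → ℝ) (hw : ∀ a, 0 < w a) (x : A → ℝ) :
    ∑ a, w a * Real.exp (x a / τ) / (∑ a', w a' * Real.exp (x a' / τ)) = 1 := by
  have hZ : 0 < ∑ a', w a' * Real.exp (x a' / τ) :=
    Finset.sum_pos (fun a _ => mul_pos (hw a) (Real.exp_pos _)) Finset.univ_nonempty
  rw [← Finset.sum_div, div_self hZ.ne']

lemma softmax_value {A : Type*} [Fintype A] [Nonempty A] (τ : ℝ) (hτ : 0 < τ)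
    (w : A → ℝ) (hw : ∀ a, 0 < w a) (x : A → ℝ) :
    ∑ a, (w a * Real.exp (x a / τ) / (∑ a', w a' * Real.exp (x a' / τ))) *
      (x a - τ * Real.log ((w a * Real.exp (x a / τ) / (∑ a', w a' * Real.exp (x a' / τ))) / w a)) =
      τ * Real.log (∑ a', w a' * Real.exp (x a' / τ)) := by
  have hZ : 0 < ∑ a', w a' * Real.exp (x a' / τ) :=
    Finset.sum_pos (fun a _ => mul_pos (hw a) (Real.exp_pos _)) Finset.univ_nonempty
  have hgpos : ∀ a, 0 < w a * Real.exp (x a / τ) / (∑ a', w a' * Real.exp (x a' / τ)) :=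
    fun a => div_pos (mul_pos (hw a) (Real.exp_pos _)) hZ
  rw [value_identity τ hτ w hw x _ hgpos (softmax_sum_one τ w hw x)]
  have : ∀ a : A, (fun a => w a * Real.exp (x a / τ) / (∑ a', w a' * Real.exp (x a' / τ))) a *
      Real.log ((w a * Real.exp (x a / τ) / (∑ a', w a' * Real.exp (x a' / τ))) /
        (w a * Real.exp (x a / τ) / (∑ a', w a' * Real.exp (x a' / τ)))) = 0 := by
    intro a
    rw [div_self (hgpos a).ne', Real.log_one, mul_zero]
  rw [Finset.sum_congr rfl fun a _ => this a, Finset.sum_const_zero, mul_zero, zero_add]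



/-- Uniqueness of the optimal extended policy: assume the
transition kernel is everywhere positive. If an extended policy `π` with
everywhere positive components satisfies `J_n(π) = J_n(π*)`, where
`J_n(π) = Σ_s V^{(n)}_π(s)`, then `π^{(i)} = π*^{(i)}` for all `1 ≤ i ≤ n`;
hence `π*` is the unique maximizer of `J_n`. -/
theorem optimal_extended_policy_unique
    {S A : Type*} [Fintype S] [Fintype A] [Nonempty S] [Nonempty A]
    (τ : ℝ) (hτ : 0 < τ)
    (pibar : S → A → ℝ) (hpibar_pos : ∀ s a, 0 < pibar s a)
    (hpibar_sum : ∀ s, ∑ a, pibar s a = 1)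
    (r : A → S → ℝ)
    (p : S → A → S → ℝ) (hp_pos : ∀ s a s', 0 < p s a s')
    (hp_sum : ∀ s a, ∑ s', p s a s' = 1)
    (n : ℕ) (hn : 1 ≤ n)
    -- the extended policy `π`, with `π i` its `i`-step component
    (π : ℕ → S → A → ℝ)
    (hπ_pos : ∀ i s a, 0 < π i s a) (hπ_sum : ∀ i s, ∑ a, π i s a = 1)
    -- value and Q functions of `π`, defined recursively
    (V : ℕ → S → ℝ) (Q : ℕ → A → S → ℝ)
    (hV0 : ∀ s, V 0 s = 0)
    (hQ : ∀ i a s, Q (i + 1) a s = r a s + ∑ s', p s a s' * V i s')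
    (hV : ∀ i s, V (i + 1) s = ∑ a, π (i + 1) s a *
      (Q (i + 1) a s - τ * Real.log (π (i + 1) s a / pibar s a)))
    -- optimal extended policy and its value and Q functions, defined recursively
    (Vstar : ℕ → S → ℝ) (Qstar : ℕ → A → S → ℝ) (pistar : ℕ → S → A → ℝ)
    (hVstar0 : ∀ s, Vstar 0 s = 0)
    (hQstar : ∀ i a s, Qstar (i + 1) a s = r a s + ∑ s', p s a s' * Vstar i s')
    (hpistar : ∀ i s a, pistar (i + 1) s a =
      pibar s a * Real.exp (Qstar (i + 1) a s / τ) /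
        ∑ a', pibar s a' * Real.exp (Qstar (i + 1) a' s / τ))
    (hVstar : ∀ i s, Vstar (i + 1) s = ∑ a, pistar (i + 1) s a *
      (Qstar (i + 1) a s - τ * Real.log (pistar (i + 1) s a / pibar s a)))
    -- the objectives coincide
    (hJ : ∑ s, V n s = ∑ s, Vstar n s) :
    ∀ i, 1 ≤ i → i ≤ n → ∀ s a, π i s a = pistar i s a := by
  have hZpos : ∀ (s : S) (x : A → ℝ), 0 < ∑ a', pibar s a' * Real.exp (x a' / τ) :=
    fun s x => Finset.sum_pos (fun a _ => mul_pos (hpibar_pos s a) (Real.exp_pos _))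
      Finset.univ_nonempty
  -- closed form for Vstar
  have hVstar_cf : ∀ i s, Vstar (i + 1) s =
      τ * Real.log (∑ a', pibar s a' * Real.exp (Qstar (i + 1) a' s / τ)) := by
    intro i s
    rw [hVstar i s, Finset.sum_congr rfl fun a _ => by rw [hpistar i s a]]
    exact softmax_value τ hτ (pibar s) (hpibar_pos s) (fun a => Qstar (i + 1) a s)
  -- decomposition of V
  have hV_decomp : ∀ i s, V (i + 1) s =
      τ * (∑ a, π (i + 1) s a * Real.log
        ((pibar s a * Real.exp (Q (i + 1) a s / τ) /
          (∑ a', pibar s a' * Real.exp (Q (i + 1) a' s / τ))) / π (i + 1) s a))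
      + τ * Real.log (∑ a', pibar s a' * Real.exp (Q (i + 1) a' s / τ)) := by
    intro i s
    rw [hV i s]
    exact value_identity τ hτ (pibar s) (hpibar_pos s) (fun a => Q (i + 1) a s)
      (fun a => π (i + 1) s a) (fun a => hπ_pos (i + 1) s a) (hπ_sum (i + 1) s)
  -- gibbs facts for π against softmax of Q
  have hgibbs : ∀ i s,
      (∑ a, π (i + 1) s a * Real.log
        ((pibar s a * Real.exp (Q (i + 1) a s / τ) /
          (∑ a', pibar s a' * Real.exp (Q (i + 1) a' s / τ))) / π (i + 1) s a) ≤ 0) ∧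
      (∑ a, π (i + 1) s a * Real.log
        ((pibar s a * Real.exp (Q (i + 1) a s / τ) /
          (∑ a', pibar s a' * Real.exp (Q (i + 1) a' s / τ))) / π (i + 1) s a) = 0 →
        ∀ a, π (i + 1) s a = pibar s a * Real.exp (Q (i + 1) a s / τ) /
          (∑ a', pibar s a' * Real.exp (Q (i + 1) a' s / τ))) := by
    intro i s
    exact gibbs_aux (fun a => π (i + 1) s a) _
      (fun a => hπ_pos (i + 1) s a)
      (fun a => div_pos (mul_pos (hpibar_pos s a) (Real.exp_pos _)) (hZpos s _))
      (hπ_sum (i + 1) s)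
      (softmax_sum_one τ (pibar s) (hpibar_pos s) (fun a => Q (i + 1) a s))
  -- V ≤ Vstar
  have hle : ∀ i s, V i s ≤ Vstar i s := by
    intro i
    induction i with
    | zero => intro s; rw [hV0 s, hVstar0 s]
    | succ i ih =>
      intro s
      have hQle : ∀ a, Q (i + 1) a s ≤ Qstar (i + 1) a s := by
        intro a
        rw [hQ i a s, hQstar i a s]
        exact add_le_add le_rfl (Finset.sum_le_sum fun s' _ =>
          mul_le_mul_of_nonneg_left (ih s') (hp_pos s a s').le)
      have hZle : (∑ a', pibar s a' * Real.exp (Q (i + 1) a' s / τ)) ≤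
          ∑ a', pibar s a' * Real.exp (Qstar (i + 1) a' s / τ) :=
        Finset.sum_le_sum fun a _ => mul_le_mul_of_nonneg_left
          (Real.exp_le_exp.mpr (by gcongr; exact hQle a)) (hpibar_pos s a).le
      calc V (i + 1) s ≤ τ * Real.log (∑ a', pibar s a' * Real.exp (Q (i + 1) a' s / τ)) := by
            rw [hV_decomp i s]
            nlinarith [(hgibbs i s).1, hτ]
        _ ≤ τ * Real.log (∑ a', pibar s a' * Real.exp (Qstar (i + 1) a' s / τ)) :=
            mul_le_mul_of_nonneg_left (Real.log_le_log (hZpos s _) hZle) hτ.le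
        _ = Vstar (i + 1) s := (hVstar_cf i s).symm
  -- the key descent step
  have step : ∀ i, (∀ s, V (i + 1) s = Vstar (i + 1) s) →
      (∀ s, V i s = Vstar i s) ∧ (∀ s a, π (i + 1) s a = pistar (i + 1) s a) := by
    intro i hEq
    have hQle : ∀ a s, Q (i + 1) a s ≤ Qstar (i + 1) a s := by
      intro a s
      rw [hQ i a s, hQstar i a s]
      exact add_le_add le_rfl (Finset.sum_le_sum fun s' _ =>
        mul_le_mul_of_nonneg_left (hle i s') (hp_pos s a s').le)
    have hmain : ∀ s, (∑ a, π (i + 1) s a * Real.log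
        ((pibar s a * Real.exp (Q (i + 1) a s / τ) /
          (∑ a', pibar s a' * Real.exp (Q (i + 1) a' s / τ))) / π (i + 1) s a) = 0) ∧
        ∀ a, Q (i + 1) a s = Qstar (i + 1) a s := by
      intro s
      have hZle : (∑ a', pibar s a' * Real.exp (Q (i + 1) a' s / τ)) ≤
          ∑ a', pibar s a' * Real.exp (Qstar (i + 1) a' s / τ) :=
        Finset.sum_le_sum fun a _ => mul_le_mul_of_nonneg_left
          (Real.exp_le_exp.mpr (by gcongr; exact hQle a s)) (hpibar_pos s a).le
      have hlogle : Real.log (∑ a', pibar s a' * Real.exp (Q (i + 1) a' s / τ)) ≤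
          Real.log (∑ a', pibar s a' * Real.exp (Qstar (i + 1) a' s / τ)) :=
        Real.log_le_log (hZpos s _) hZle
      have heq := hEq s
      rw [hV_decomp i s, hVstar_cf i s] at heq
      have hKL0 : (∑ a, π (i + 1) s a * Real.log
          ((pibar s a * Real.exp (Q (i + 1) a s / τ) /
            (∑ a', pibar s a' * Real.exp (Q (i + 1) a' s / τ))) / π (i + 1) s a)) = 0 := by
        nlinarith [(hgibbs i s).1, hτ]
      have hlogeq : Real.log (∑ a', pibar s a' * Real.exp (Q (i + 1) a' s / τ)) =
          Real.log (∑ a', pibar s a' * Real.exp (Qstar (i + 1) a' s / τ)) := by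
        nlinarith [(hgibbs i s).1, hτ]
      have hZeq : (∑ a', pibar s a' * Real.exp (Q (i + 1) a' s / τ)) =
          ∑ a', pibar s a' * Real.exp (Qstar (i + 1) a' s / τ) :=
        Real.log_injOn_pos (Set.mem_Ioi.mpr (hZpos s _)) (Set.mem_Ioi.mpr (hZpos s _)) hlogeq
      refine ⟨hKL0, fun a => ?_⟩
      have hterm : pibar s a * Real.exp (Q (i + 1) a s / τ) =
          pibar s a * Real.exp (Qstar (i + 1) a s / τ) :=
        (Finset.sum_eq_sum_iff_of_le fun a _ => mul_le_mul_of_nonneg_left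
          (Real.exp_le_exp.mpr (by gcongr; exact hQle a s))
          (hpibar_pos s a).le).mp hZeq a (Finset.mem_univ a)
      have hexp : Real.exp (Q (i + 1) a s / τ) = Real.exp (Qstar (i + 1) a s / τ) :=
        mul_left_cancel₀ (hpibar_pos s a).ne' hterm
      have := Real.exp_injective hexp
      field_simp at this
      exact this
    have hQeq : ∀ a s, Q (i + 1) a s = Qstar (i + 1) a s := fun a s => (hmain s).2 a
    constructor
    · -- V i = Vstar i
      intro s'
      obtain ⟨s⟩ := (inferInstance : Nonempty S)
      obtain ⟨a⟩ := (inferInstance : Nonempty A)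
      have h1 : Q (i + 1) a s = Qstar (i + 1) a s := hQeq a s
      rw [hQ i a s, hQstar i a s, add_right_inj] at h1
      have := (Finset.sum_eq_sum_iff_of_le fun t _ =>
        mul_le_mul_of_nonneg_left (hle i t) (hp_pos s a t).le).mp h1 s' (Finset.mem_univ s')
      exact mul_left_cancel₀ (hp_pos s a s').ne' this
    · -- π = pistar
      intro s a
      rw [(hgibbs i s).2 (hmain s).1 a, hpistar i s a,
        Finset.sum_congr rfl fun a' _ => by rw [hQeq a' s], hQeq a s]
  -- equality at horizon n
  have hEqn : ∀ s, V n s = Vstar n s := by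
    intro s
    exact (Finset.sum_eq_sum_iff_of_le fun t _ => hle n t).mp hJ s (Finset.mem_univ s)
  -- downward induction
  have main : ∀ m, (∀ s, V m s = Vstar m s) →
      ∀ i, 1 ≤ i → i ≤ m → ∀ s a, π i s a = pistar i s a := by
    intro m
    induction m with
    | zero => intro _ i h1 h2; omega
    | succ m ih =>
      intro hE i h1 h2
      rcases Nat.lt_or_ge i (m + 1) with h | h
      · exact ih (step m hE).1 i h1 (by omega)
      · have hi : i = m + 1 := by omega
        subst hi
        exact (step m hE).2
  exact main n hEqn
end

section
/- Consistency of optimal extended policies across horizons (truncation property): assume p(s,a,s') > 0 for all s, a, s'. If an extended policy π = (π^{(1)},…,π^{(n)}) of horizon n with everywhere positive components maximizes J_n, then for every 1 ≤ m < n the truncated extended policy T_{n,m}(π) := (π^{(1)},…,π^{(m)}) maximizes J_m over extended policies of horizon m; that is, the optimal policies satisfy T_{n,m}(π_{*,n}) = π_{*,m}. -/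
noncomputable def Vstar {S A : Type*} [Fintype S] [Fintype A] (τ : ℝ)
    (pibar : S → A → ℝ) (r : A → S → ℝ) (p : S → A → S → ℝ) : ℕ → S → ℝ
  | 0 => fun _ => 0
  | (i+1) => fun s => τ * Real.log (∑ a, pibar s a *
      Real.exp ((r a s + ∑ s', p s a s' * Vstar τ pibar r p i s') / τ))

noncomputable def Qstar {S A : Type*} [Fintype S] [Fintype A] (τ : ℝ)
    (pibar : S → A → ℝ) (r : A → S → ℝ) (p : S → A → S → ℝ) : ℕ → A → S → ℝ :=
  fun i a s => r a s + ∑ s', p s a s' * Vstar τ pibar r p (i - 1) s'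

lemma gibbs {A : Type*} [Fintype A] [Nonempty A] (τ : ℝ) (hτ : 0 < τ)
    (pb : A → ℝ) (hpb : ∀ a, 0 < pb a)
    (pi' : A → ℝ) (hpi' : ∀ a, 0 < pi' a) (hsum : ∑ a, pi' a = 1)
    (q : A → ℝ) :
    ∑ a, pi' a * (q a - τ * Real.log (pi' a / pb a)) ≤
      τ * Real.log (∑ a, pb a * Real.exp (q a / τ)) := by
  set Z : ℝ := ∑ a, pb a * Real.exp (q a / τ) with hZdef
  have hZ : 0 < Z :=
    Finset.sum_pos (fun a _ => mul_pos (hpb a) (Real.exp_pos _)) Finset.univ_nonempty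
  set w : A → ℝ := fun a => pb a * Real.exp (q a / τ) / Z with hwdef
  have hw : ∀ a, 0 < w a := fun a => div_pos (mul_pos (hpb a) (Real.exp_pos _)) hZ
  have hwsum : ∑ a, w a = 1 := by
    simp only [hwdef]
    rw [← Finset.sum_div, ← hZdef, div_self hZ.ne']
  have key : ∀ a, pi' a * (q a - τ * Real.log (pi' a / pb a)) =
      pi' a * (τ * Real.log Z) + τ * (pi' a * Real.log (w a / pi' a)) := by
    intro a
    have h1 : Real.log (pi' a / pb a) = Real.log (pi' a) - Real.log (pb a) :=
      Real.log_div (hpi' a).ne' (hpb a).ne'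
    have h2 : Real.log (w a / pi' a)
        = Real.log (pb a) + q a / τ - Real.log Z - Real.log (pi' a) := by
      rw [hwdef]
      rw [Real.log_div (div_pos (mul_pos (hpb a) (Real.exp_pos _)) hZ).ne' (hpi' a).ne',
        Real.log_div (mul_pos (hpb a) (Real.exp_pos _)).ne' hZ.ne',
        Real.log_mul (hpb a).ne' (Real.exp_pos _).ne', Real.log_exp]
    rw [h1, h2]
    field_simp
    ring
  calc ∑ a, pi' a * (q a - τ * Real.log (pi' a / pb a))
      = ∑ a, (pi' a * (τ * Real.log Z) + τ * (pi' a * Real.log (w a / pi' a))) := by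
        exact Finset.sum_congr rfl (fun a _ => key a)
    _ = τ * Real.log Z + τ * ∑ a, pi' a * Real.log (w a / pi' a) := by
        rw [Finset.sum_add_distrib, ← Finset.sum_mul, hsum, one_mul, ← Finset.mul_sum]
    _ ≤ τ * Real.log Z + τ * 0 := by
        gcongr
        calc ∑ a, pi' a * Real.log (w a / pi' a)
            ≤ ∑ a, (w a - pi' a) := by
              apply Finset.sum_le_sum
              intro a _
              have := Real.log_le_sub_one_of_pos (div_pos (hw a) (hpi' a))
              calc pi' a * Real.log (w a / pi' a) ≤ pi' a * (w a / pi' a - 1) := by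
                    exact mul_le_mul_of_nonneg_left this (hpi' a).le
                _ = w a - pi' a := by rw [mul_sub, mul_one, mul_div_cancel₀ _ (hpi' a).ne']
          _ = 0 := by rw [Finset.sum_sub_distrib, hwsum, hsum, sub_self]
    _ = τ * Real.log Z := by ring

/-- Monotone upper bound: any policy's value function is dominated by `Vstar`. -/
lemma V_le_Vstar {S A : Type*} [Fintype S] [Fintype A] [Nonempty S] [Nonempty A]
    (τ : ℝ) (hτ : 0 < τ)
    (pibar : S → A → ℝ) (hpibar_pos : ∀ s a, 0 < pibar s a)
    (r : A → S → ℝ) (p : S → A → S → ℝ) (hp_pos : ∀ s a s', 0 < p s a s')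
    (π' : ℕ → S → A → ℝ)
    (hπ'_pos : ∀ i s a, 0 < π' i s a) (hπ'_sum : ∀ i s, ∑ a, π' i s a = 1)
    (V' : ℕ → S → ℝ) (Q' : ℕ → A → S → ℝ)
    (hV'0 : ∀ s, V' 0 s = 0)
    (hQ' : ∀ i a s, Q' (i + 1) a s = r a s + ∑ s', p s a s' * V' i s')
    (hV' : ∀ i s, V' (i + 1) s = ∑ a, π' (i + 1) s a *
      (Q' (i + 1) a s - τ * Real.log (π' (i + 1) s a / pibar s a))) :
    ∀ i s, V' i s ≤ Vstar τ pibar r p i s := by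
  intro i
  induction i with
  | zero => intro s; rw [hV'0 s]; simp [Vstar]
  | succ i ih =>
    intro s
    have hQle : ∀ a, Q' (i + 1) a s ≤ r a s + ∑ s', p s a s' * Vstar τ pibar r p i s' := by
      intro a
      rw [hQ']
      apply add_le_add (le_refl _)
      apply Finset.sum_le_sum
      intro s' _
      exact mul_le_mul_of_nonneg_left (ih s') (hp_pos s a s').le
    calc V' (i + 1) s
        ≤ ∑ a, π' (i + 1) s a *
            ((r a s + ∑ s', p s a s' * Vstar τ pibar r p i s')
              - τ * Real.log (π' (i + 1) s a / pibar s a)) := by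
          rw [hV']
          apply Finset.sum_le_sum
          intro a _
          apply mul_le_mul_of_nonneg_left _ (hπ'_pos _ s a).le
          exact sub_le_sub_right (hQle a) _
      _ ≤ τ * Real.log (∑ a, pibar s a *
            Real.exp ((r a s + ∑ s', p s a s' * Vstar τ pibar r p i s') / τ)) :=
          gibbs τ hτ (pibar s) (hpibar_pos s) (π' (i + 1) s) (hπ'_pos _ s)
            (hπ'_sum _ s) _
      _ = Vstar τ pibar r p (i + 1) s := by simp [Vstar]

/-- Strict version: a strict gap at step `i` propagates to every state at step `i+1`. -/
lemma V_lt_Vstar_succ {S A : Type*} [Fintype S] [Fintype A] [Nonempty S] [Nonempty A]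
    (τ : ℝ) (hτ : 0 < τ)
    (pibar : S → A → ℝ) (hpibar_pos : ∀ s a, 0 < pibar s a)
    (r : A → S → ℝ) (p : S → A → S → ℝ) (hp_pos : ∀ s a s', 0 < p s a s')
    (π' : ℕ → S → A → ℝ)
    (hπ'_pos : ∀ i s a, 0 < π' i s a) (hπ'_sum : ∀ i s, ∑ a, π' i s a = 1)
    (V' : ℕ → S → ℝ) (Q' : ℕ → A → S → ℝ)
    (hQ' : ∀ i a s, Q' (i + 1) a s = r a s + ∑ s', p s a s' * V' i s')
    (hV' : ∀ i s, V' (i + 1) s = ∑ a, π' (i + 1) s a *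
      (Q' (i + 1) a s - τ * Real.log (π' (i + 1) s a / pibar s a)))
    (i : ℕ) (hle : ∀ s, V' i s ≤ Vstar τ pibar r p i s)
    (s0 : S) (hlt : V' i s0 < Vstar τ pibar r p i s0) :
    ∀ s, V' (i + 1) s < Vstar τ pibar r p (i + 1) s := by
  intro s
  have hQlt : ∀ a, Q' (i + 1) a s < r a s + ∑ s', p s a s' * Vstar τ pibar r p i s' := by
    intro a
    rw [hQ']
    apply add_lt_add_of_le_of_lt (le_refl _)
    apply Finset.sum_lt_sum
    · exact fun s' _ => mul_le_mul_of_nonneg_left (hle s') (hp_pos s a s').le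
    · exact ⟨s0, Finset.mem_univ s0,
        mul_lt_mul_of_pos_left hlt (hp_pos s a s0)⟩
  calc V' (i + 1) s
      < ∑ a, π' (i + 1) s a *
          ((r a s + ∑ s', p s a s' * Vstar τ pibar r p i s')
            - τ * Real.log (π' (i + 1) s a / pibar s a)) := by
        rw [hV']
        apply Finset.sum_lt_sum_of_nonempty Finset.univ_nonempty
        intro a _
        exact mul_lt_mul_of_pos_left (sub_lt_sub_right (hQlt a) _) (hπ'_pos _ s a)
    _ ≤ τ * Real.log (∑ a, pibar s a *
          Real.exp ((r a s + ∑ s', p s a s' * Vstar τ pibar r p i s') / τ)) :=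
        gibbs τ hτ (pibar s) (hpibar_pos s) (π' (i + 1) s) (hπ'_pos _ s)
          (hπ'_sum _ s) _
    _ = Vstar τ pibar r p (i + 1) s := by simp [Vstar]

noncomputable def pistar {S A : Type*} [Fintype S] [Fintype A] (τ : ℝ)
    (pibar : S → A → ℝ) (r : A → S → ℝ) (p : S → A → S → ℝ) : ℕ → S → A → ℝ :=
  fun i s a => pibar s a * Real.exp (Qstar τ pibar r p i a s / τ) /
    (∑ b, pibar s b * Real.exp (Qstar τ pibar r p i b s / τ))

section pistar_props
variable {S A : Type*} [Fintype S] [Fintype A] [Nonempty S] [Nonempty A]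
  (τ : ℝ) (pibar : S → A → ℝ) (r : A → S → ℝ) (p : S → A → S → ℝ)

lemma Z_pos (hpibar_pos : ∀ s a, 0 < pibar s a) (i : ℕ) (s : S) :
    0 < ∑ b, pibar s b * Real.exp (Qstar τ pibar r p i b s / τ) :=
  Finset.sum_pos (fun b _ => mul_pos (hpibar_pos s b) (Real.exp_pos _))
    Finset.univ_nonempty

lemma pistar_pos (hpibar_pos : ∀ s a, 0 < pibar s a) :
    ∀ i s a, 0 < pistar τ pibar r p i s a := fun i s a =>
  div_pos (mul_pos (hpibar_pos s a) (Real.exp_pos _))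
    (Z_pos τ pibar r p hpibar_pos i s)

lemma pistar_sum (hpibar_pos : ∀ s a, 0 < pibar s a) :
    ∀ i s, ∑ a, pistar τ pibar r p i s a = 1 := by
  intro i s
  rw [show (∑ a, pistar τ pibar r p i s a) = (∑ a, pibar s a *
      Real.exp (Qstar τ pibar r p i a s / τ)) /
      (∑ b, pibar s b * Real.exp (Qstar τ pibar r p i b s / τ)) from
    (Finset.sum_div _ _ _).symm]
  exact div_self (Z_pos τ pibar r p hpibar_pos i s).ne'

lemma Qstar_rec : ∀ i a s, Qstar τ pibar r p (i + 1) a s =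
    r a s + ∑ s', p s a s' * Vstar τ pibar r p i s' := by
  intro i a s; simp [Qstar]

lemma Vstar_rec (hτ : 0 < τ) (hpibar_pos : ∀ s a, 0 < pibar s a) :
    ∀ i s, Vstar τ pibar r p (i + 1) s = ∑ a, pistar τ pibar r p (i + 1) s a *
      (Qstar τ pibar r p (i + 1) a s -
        τ * Real.log (pistar τ pibar r p (i + 1) s a / pibar s a)) := by
  intro i s
  set Z : ℝ := ∑ b, pibar s b * Real.exp (Qstar τ pibar r p (i + 1) b s / τ) with hZdef
  have hZ : 0 < Z := Z_pos τ pibar r p hpibar_pos (i + 1) s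
  have hterm : ∀ a, Qstar τ pibar r p (i + 1) a s -
      τ * Real.log (pistar τ pibar r p (i + 1) s a / pibar s a) = τ * Real.log Z := by
    intro a
    have h1 : pistar τ pibar r p (i + 1) s a / pibar s a
        = Real.exp (Qstar τ pibar r p (i + 1) a s / τ) / Z := by
      rw [pistar, ← hZdef, div_right_comm, mul_div_cancel_left₀ _ (hpibar_pos s a).ne']
    rw [h1, Real.log_div (Real.exp_pos _).ne' hZ.ne', Real.log_exp]
    field_simp
    ring
  calc Vstar τ pibar r p (i + 1) s = τ * Real.log Z := by
        rw [hZdef]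
        simp only [Vstar, Qstar_rec]
    _ = (∑ a, pistar τ pibar r p (i + 1) s a) * (τ * Real.log Z) := by
        rw [pistar_sum τ pibar r p hpibar_pos, one_mul]
    _ = ∑ a, pistar τ pibar r p (i + 1) s a *
        (Qstar τ pibar r p (i + 1) a s -
          τ * Real.log (pistar τ pibar r p (i + 1) s a / pibar s a)) := by
        rw [Finset.sum_mul]
        exact Finset.sum_congr rfl (fun a _ => by rw [hterm a])

end pistar_props

/-- Consistency of optimal extended policies across horizons
(truncation property): assume the transition kernel is everywhere positive. If
an extended policy `π` of horizon `n` with everywhere positive components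
maximizes `J_n` over extended policies, then for every `1 ≤ m < n` its
truncation `(π^{(1)},…,π^{(m)})` maximizes `J_m`; i.e.
`T_{n,m}(π_{*,n}) = π_{*,m}`. (The value function of the truncated policy at
horizon `m` is `V^{(m)}_π`.) -/
theorem truncation_of_optimal_extended_policy
    {S A : Type*} [Fintype S] [Fintype A] [Nonempty S] [Nonempty A]
    (τ : ℝ) (hτ : 0 < τ)
    (pibar : S → A → ℝ) (hpibar_pos : ∀ s a, 0 < pibar s a)
    (hpibar_sum : ∀ s, ∑ a, pibar s a = 1)
    (r : A → S → ℝ)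
    (p : S → A → S → ℝ) (hp_pos : ∀ s a s', 0 < p s a s')
    (hp_sum : ∀ s a, ∑ s', p s a s' = 1)
    (n : ℕ) (hn : 1 ≤ n)
    -- the extended policy `π`, with `π i` its `i`-step component
    (π : ℕ → S → A → ℝ)
    (hπ_pos : ∀ i s a, 0 < π i s a) (hπ_sum : ∀ i s, ∑ a, π i s a = 1)
    -- value and Q functions of `π`, defined recursively
    (V : ℕ → S → ℝ) (Q : ℕ → A → S → ℝ)
    (hV0 : ∀ s, V 0 s = 0)
    (hQ : ∀ i a s, Q (i + 1) a s = r a s + ∑ s', p s a s' * V i s')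
    (hV : ∀ i s, V (i + 1) s = ∑ a, π (i + 1) s a *
      (Q (i + 1) a s - τ * Real.log (π (i + 1) s a / pibar s a)))
    -- `π` maximizes `J_n` over extended policies (with positive components)
    (hmax : ∀ (π' : ℕ → S → A → ℝ),
      (∀ i s a, 0 < π' i s a) → (∀ i s, ∑ a, π' i s a = 1) →
      ∀ (V' : ℕ → S → ℝ) (Q' : ℕ → A → S → ℝ),
        (∀ s, V' 0 s = 0) →
        (∀ i a s, Q' (i + 1) a s = r a s + ∑ s', p s a s' * V' i s') →
        (∀ i s, V' (i + 1) s = ∑ a, π' (i + 1) s a *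
          (Q' (i + 1) a s - τ * Real.log (π' (i + 1) s a / pibar s a))) →
        (∑ s, V' n s) ≤ ∑ s, V n s) :
    -- the truncation of `π` to any horizon `1 ≤ m < n` maximizes `J_m`
    ∀ m, 1 ≤ m → m < n →
      ∀ (π' : ℕ → S → A → ℝ),
        (∀ i s a, 0 < π' i s a) → (∀ i s, ∑ a, π' i s a = 1) →
        ∀ (V' : ℕ → S → ℝ) (Q' : ℕ → A → S → ℝ),
          (∀ s, V' 0 s = 0) →
          (∀ i a s, Q' (i + 1) a s = r a s + ∑ s', p s a s' * V' i s') →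
          (∀ i s, V' (i + 1) s = ∑ a, π' (i + 1) s a *
            (Q' (i + 1) a s - τ * Real.log (π' (i + 1) s a / pibar s a))) →
          (∑ s, V' m s) ≤ ∑ s, V m s := by
  intro m _hm1 hmn π' hπ'pos hπ'sum V' Q' hV'0 hQ' hV'
  have hVle : ∀ i s, V i s ≤ Vstar τ pibar r p i s :=
    V_le_Vstar τ hτ pibar hpibar_pos r p hp_pos π hπ_pos hπ_sum V Q hV0 hQ hV
  have hV'le : ∀ i s, V' i s ≤ Vstar τ pibar r p i s :=
    V_le_Vstar τ hτ pibar hpibar_pos r p hp_pos π' hπ'pos hπ'sum V' Q' hV'0 hQ' hV'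
  have hopt : (∑ s, Vstar τ pibar r p n s) ≤ ∑ s, V n s :=
    hmax (pistar τ pibar r p) (pistar_pos τ pibar r p hpibar_pos)
      (pistar_sum τ pibar r p hpibar_pos) (Vstar τ pibar r p) (Qstar τ pibar r p)
      (fun s => by simp [Vstar]) (Qstar_rec τ pibar r p)
      (Vstar_rec τ pibar r p hτ hpibar_pos)
  have hVn : ∀ s, V n s = Vstar τ pibar r p n s := by
    by_contra h
    push_neg at h
    obtain ⟨s0, hs0⟩ := h
    have hlt : V n s0 < Vstar τ pibar r p n s0 := lt_of_le_of_ne (hVle n s0) hs0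
    have : (∑ s, V n s) < ∑ s, Vstar τ pibar r p n s :=
      Finset.sum_lt_sum (fun s _ => hVle n s) ⟨s0, Finset.mem_univ s0, hlt⟩
    linarith
  have hstep : ∀ i, (∀ s, V (i + 1) s = Vstar τ pibar r p (i + 1) s) →
      ∀ s, V i s = Vstar τ pibar r p i s := by
    intro i hnext
    by_contra h
    push_neg at h
    obtain ⟨s0, hs0⟩ := h
    have hlt := lt_of_le_of_ne (hVle i s0) hs0
    have := V_lt_Vstar_succ τ hτ pibar hpibar_pos r p hp_pos π hπ_pos hπ_sum V Q
      hQ hV i (hVle i) s0 hlt (Classical.arbitrary S)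
    rw [hnext _] at this
    exact lt_irrefl _ this
  have hdown : ∀ k i, (∀ s, V (i + k) s = Vstar τ pibar r p (i + k) s) →
      ∀ s, V i s = Vstar τ pibar r p i s := by
    intro k
    induction k with
    | zero => exact fun i h => h
    | succ k ih => exact fun i h => ih i (hstep (i + k) h)
  have hVm : ∀ s, V m s = Vstar τ pibar r p m s := by
    have hmn' : m + (n - m) = n := by omega
    exact hdown (n - m) m (by rw [hmn']; exact hVn)
  calc ∑ s, V' m s ≤ ∑ s, Vstar τ pibar r p m s :=
        Finset.sum_le_sum fun s _ => hV'le m s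
    _ = ∑ s, V m s := Finset.sum_congr rfl fun s _ => (hVm s).symm
end

section
/- Per-state gradient of the i-step value function: let the i-step policy be the softmax of linear preferences, π^{(i)}_{θ^{(i)}}(a|s) := π̄(a|s) exp(⟨θ^{(i)}, ψ^{(i)}(a,s)⟩/τ) / Σ_{a'} π̄(a'|s) exp(⟨θ^{(i)}, ψ^{(i)}(a',s)⟩/τ), with the policies π^{(1)},…,π^{(i−1)} fixed (not depending on θ^{(i)}). Then for every state s, ∇_{θ^{(i)}} V^{(i)}_π(s) = Σ_{a∈A} π^{(i)}_{θ^{(i)}}(a|s) ( Q^{(i)}_π(a,s) − τ log(π^{(i)}_{θ^{(i)}}(a|s)/π̄(a|s)) ) ∇_{θ^{(i)}} log π^{(i)}_{θ^{(i)}}(a|s). -/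
open scoped RealInnerProductSpace

/-- Per-state gradient of the `i`-step value function: with the
policies `π^{(1)},…,π^{(i−1)}` fixed and the `i`-step policy the softmax of
linear preferences with parameter `θ`,
`∇_θ V^{(i)}_π(s) = Σ_a π^{(i)}_θ(a|s)
(Q^{(i)}_π(a,s) − τ log(π^{(i)}_θ(a|s)/π̄(a|s))) ∇_θ log π^{(i)}_θ(a|s)`. -/
theorem per_state_gradient_value_function
    {S A : Type*} [Fintype S] [Fintype A] [Nonempty S] [Nonempty A]
    (τ : ℝ) (hτ : 0 < τ)
    (pibar : S → A → ℝ) (hpibar_pos : ∀ s a, 0 < pibar s a)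
    (hpibar_sum : ∀ s, ∑ a, pibar s a = 1)
    (r : A → S → ℝ)
    (p : S → A → S → ℝ) (hp_nonneg : ∀ s a s', 0 ≤ p s a s')
    (hp_sum : ∀ s a, ∑ s', p s a s' = 1)
    (i : ℕ) (hi : 1 ≤ i)
    -- the fixed lower-step policies (only `π 1, …, π (i-1)` matter)
    (π : ℕ → S → A → ℝ)
    (hπ_pos : ∀ j s a, 0 < π j s a) (hπ_sum : ∀ j s, ∑ a, π j s a = 1)
    -- value and Q functions of the fixed lower-step policies
    (V : ℕ → S → ℝ) (Q : ℕ → A → S → ℝ)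
    (hV0 : ∀ s, V 0 s = 0)
    (hQ : ∀ j a s, Q (j + 1) a s = r a s + ∑ s', p s a s' * V j s')
    (hV : ∀ j s, V (j + 1) s = ∑ a, π (j + 1) s a *
      (Q (j + 1) a s - τ * Real.log (π (j + 1) s a / pibar s a)))
    -- the parametrized `i`-step softmax policy with linear preferences
    (P : ℕ) (ψ : A → S → EuclideanSpace ℝ (Fin P))
    (πθ : EuclideanSpace ℝ (Fin P) → S → A → ℝ)
    (hπθ : ∀ θ s a, πθ θ s a =
      pibar s a * Real.exp (⟪θ, ψ a s⟫ / τ) /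
        ∑ a', pibar s a' * Real.exp (⟪θ, ψ a' s⟫ / τ))
    -- the `i`-step value function as a function of `θ`
    (Vi : EuclideanSpace ℝ (Fin P) → S → ℝ)
    (hVi : ∀ θ s, Vi θ s = ∑ a, πθ θ s a *
      (Q i a s - τ * Real.log (πθ θ s a / pibar s a)))
    (θ : EuclideanSpace ℝ (Fin P)) (s : S) :
    gradient (fun θ' => Vi θ' s) θ
      = ∑ a, (πθ θ s a * (Q i a s - τ * Real.log (πθ θ s a / pibar s a))) •
          gradient (fun θ' => Real.log (πθ θ' s a)) θ := by
  classical
  have hZpos : ∀ θ' : EuclideanSpace ℝ (Fin P),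
      0 < ∑ a', pibar s a' * Real.exp (⟪θ', ψ a' s⟫ / τ) := fun θ' =>
    Finset.sum_pos (fun a _ => mul_pos (hpibar_pos s a) (Real.exp_pos _))
      Finset.univ_nonempty
  have hfpos : ∀ (a : A) θ', 0 < πθ θ' s a := by
    intro a θ'
    rw [hπθ]
    exact div_pos (mul_pos (hpibar_pos s a) (Real.exp_pos _)) (hZpos θ')
  have hsum1 : ∀ θ' : EuclideanSpace ℝ (Fin P), ∑ a, πθ θ' s a = 1 := by
    intro θ'
    have : ∑ a, πθ θ' s a
        = (∑ a, pibar s a * Real.exp (⟪θ', ψ a s⟫ / τ)) /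
            ∑ a', pibar s a' * Real.exp (⟪θ', ψ a' s⟫ / τ) := by
      rw [Finset.sum_div]
      exact Finset.sum_congr rfl fun a _ => hπθ θ' s a
    rw [this, div_self (hZpos θ').ne']
  have hdiff : ∀ a : A, DifferentiableAt ℝ (fun θ' => πθ θ' s a) θ := by
    intro a
    have hrw : (fun θ' => πθ θ' s a)
        = fun θ' : EuclideanSpace ℝ (Fin P) =>
            (pibar s a * Real.exp (⟪θ', ψ a s⟫ * τ⁻¹)) *
              (∑ a', pibar s a' * Real.exp (⟪θ', ψ a' s⟫ * τ⁻¹))⁻¹ := by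
      funext θ'
      rw [hπθ]
      simp [div_eq_mul_inv]
    rw [hrw]
    have hb : ∀ b : A, DifferentiableAt ℝ
        (fun θ' : EuclideanSpace ℝ (Fin P) =>
          pibar s b * Real.exp (⟪θ', ψ b s⟫ * τ⁻¹)) θ := by
      intro b
      have h0 : DifferentiableAt ℝ
          (fun θ' : EuclideanSpace ℝ (Fin P) => ⟪θ', ψ b s⟫) θ :=
        differentiableAt_id.inner ℝ (differentiableAt_const (ψ b s))
      exact DifferentiableAt.const_mul
        (Real.differentiable_exp.differentiableAt.comp θ (h0.mul_const τ⁻¹)) _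
    have hZd : DifferentiableAt ℝ
        (fun θ' : EuclideanSpace ℝ (Fin P) =>
          ∑ a', pibar s a' * Real.exp (⟪θ', ψ a' s⟫ * τ⁻¹)) θ :=
      DifferentiableAt.fun_sum fun b _ => hb b
    have hZne : (∑ a', pibar s a' * Real.exp (⟪θ, ψ a' s⟫ * τ⁻¹)) ≠ 0 := by
      refine ne_of_gt (Finset.sum_pos (fun b _ => mul_pos (hpibar_pos s b) (Real.exp_pos _)) Finset.univ_nonempty)
    exact (hb a).mul (hZd.inv hZne)
  -- notation
  set F : A → EuclideanSpace ℝ (Fin P) →L[ℝ] ℝ :=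
    fun a => fderiv ℝ (fun θ' => πθ θ' s a) θ with hF
  have hFa : ∀ a : A, HasFDerivAt (fun θ' => πθ θ' s a) (F a) θ :=
    fun a => (hdiff a).hasFDerivAt
  have hlog : ∀ a : A, HasFDerivAt (fun θ' => Real.log (πθ θ' s a))
      ((πθ θ s a)⁻¹ • F a) θ :=
    fun a => (hFa a).log (hfpos a θ).ne'
  -- sum of derivatives is zero
  have hsum0 : (∑ a, F a) = 0 := by
    have h1 : HasFDerivAt (fun θ' => ∑ a, πθ θ' s a) (∑ a, F a) θ :=
      HasFDerivAt.fun_sum fun a _ => hFa a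
    have h2 : (fun θ' : EuclideanSpace ℝ (Fin P) => ∑ a, πθ θ' s a)
        = fun _ => (1 : ℝ) := funext hsum1
    rw [h2] at h1
    exact h1.unique (hasFDerivAt_const 1 θ)
  -- derivative of each summand
  have hterm : ∀ a : A, HasFDerivAt
      (fun θ' => πθ θ' s a * (Q i a s - τ * Real.log (πθ θ' s a / pibar s a)))
      (((Q i a s - τ * Real.log (πθ θ s a / pibar s a)) - τ) • F a) θ := by
    intro a
    have hrw : (fun θ' => πθ θ' s a *
        (Q i a s - τ * Real.log (πθ θ' s a / pibar s a)))
        = fun θ' => πθ θ' s a *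
            ((Q i a s + τ * Real.log (pibar s a)) - τ * Real.log (πθ θ' s a)) := by
      funext θ'
      rw [Real.log_div (hfpos a θ').ne' (hpibar_pos s a).ne']
      ring
    rw [hrw]
    have h1 : HasFDerivAt
        (fun θ' => (Q i a s + τ * Real.log (pibar s a)) - τ * Real.log (πθ θ' s a))
        (0 - τ • ((πθ θ s a)⁻¹ • F a)) θ :=
      (hasFDerivAt_const _ θ).sub ((hlog a).const_smul τ)
    have h2 := (hFa a).fun_mul h1
    refine h2.congr_fderiv ?_
    have hc : πθ θ s a * (πθ θ s a)⁻¹ = 1 := mul_inv_cancel₀ (hfpos a θ).ne'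
    ext v
    simp only [ContinuousLinearMap.add_apply, ContinuousLinearMap.smul_apply,
      ContinuousLinearMap.sub_apply, ContinuousLinearMap.zero_apply, smul_eq_mul,
      Real.log_div (hfpos a θ).ne' (hpibar_pos s a).ne']
    field_simp [(hfpos a θ).ne']
    ring
  -- fderiv of Vi
  have hVirw : (fun θ' => Vi θ' s)
      = fun θ' => ∑ a, πθ θ' s a *
          (Q i a s - τ * Real.log (πθ θ' s a / pibar s a)) :=
    funext fun θ' => hVi θ' s
  have hViD : HasFDerivAt (fun θ' => Vi θ' s)
      (∑ a, ((Q i a s - τ * Real.log (πθ θ s a / pibar s a)) - τ) • F a) θ := by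
    rw [hVirw]
    exact HasFDerivAt.fun_sum fun a _ => hterm a
  have hfd : fderiv ℝ (fun θ' => Vi θ' s) θ
      = ∑ a, (πθ θ s a * (Q i a s - τ * Real.log (πθ θ s a / pibar s a))) •
          ((πθ θ s a)⁻¹ • F a) := by
    rw [hViD.fderiv]
    have : ∀ a : A, (πθ θ s a * (Q i a s - τ * Real.log (πθ θ s a / pibar s a))) •
        ((πθ θ s a)⁻¹ • F a)
        = (Q i a s - τ * Real.log (πθ θ s a / pibar s a)) • F a := by
      intro a
      rw [smul_smul]
      congr 1
      field_simp [(hfpos a θ).ne']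
    rw [Finset.sum_congr rfl fun a _ => this a]
    have hL : (∑ a, ((Q i a s - τ * Real.log (πθ θ s a / pibar s a)) - τ) • F a)
        = (∑ a, (Q i a s - τ * Real.log (πθ θ s a / pibar s a)) • F a)
            - τ • (∑ a, F a) := by
      rw [Finset.smul_sum, ← Finset.sum_sub_distrib]
      exact Finset.sum_congr rfl fun a _ => by ext v; simp [sub_mul]
    rw [hL, hsum0, smul_zero, sub_zero]
  -- conclude via gradient = toDual.symm ∘ fderiv
  have hgrad : ∀ (g : EuclideanSpace ℝ (Fin P) → ℝ) (x),
      gradient g x = (InnerProductSpace.toDual ℝ _).symm (fderiv ℝ g x) :=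
    fun g x => rfl
  rw [hgrad, hfd, map_sum]
  refine Finset.sum_congr rfl fun a _ => ?_
  rw [hgrad, (hlog a).fderiv, map_smul]
end

section
/- Matryoshka Policy Gradient theorem (ideal update, finite state space): let π_θ = (π^{(1)}_{θ^{(1)}},…,π^{(n)}_{θ^{(n)}}) be an extended policy whose i-step policies are softmax of linear preferences with disjoint parameters θ^{(i)} ∈ ℝ^P. Then for every 1 ≤ i ≤ n, ∇_{θ^{(i)}} J_n(π_θ) = Σ_{s∈S} ρ^{(n−i)}(s) ∇_{θ^{(i)}} V^{(i)}_{π_θ}(s) = Σ_{s∈S} ρ^{(n−i)}(s) Σ_{a∈A} π^{(i)}_{θ^{(i)}}(a|s) ( Q^{(i)}_{π_θ}(a,s) − τ log(π^{(i)}_{θ^{(i)}}(a|s)/π̄(a|s)) ) ∇_{θ^{(i)}} log π^{(i)}_{θ^{(i)}}(a|s), where ρ^{(k)} is the occupancy weight of the state visited after k steps. -/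
open scoped RealInnerProductSpace
open InnerProductSpace

section helpers
variable {E : Type*} [NormedAddCommGroup E] [InnerProductSpace ℝ E] [CompleteSpace E]

lemma mpg_hga_add {f g : E → ℝ} {f' g' : E} {x : E}
    (hf : HasGradientAt f f' x) (hg : HasGradientAt g g' x) :
    HasGradientAt (fun y => f y + g y) (f' + g') x := by
  rw [hasGradientAt_iff_hasFDerivAt] at hf hg ⊢
  simpa [map_add] using hf.fun_add hg

lemma mpg_hga_sub {f g : E → ℝ} {f' g' : E} {x : E}
    (hf : HasGradientAt f f' x) (hg : HasGradientAt g g' x) :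
    HasGradientAt (fun y => f y - g y) (f' - g') x := by
  rw [hasGradientAt_iff_hasFDerivAt] at hf hg ⊢
  simpa [map_sub] using hf.fun_sub hg

lemma mpg_hga_const_mul {f : E → ℝ} {f' : E} {x : E} (c : ℝ)
    (hf : HasGradientAt f f' x) :
    HasGradientAt (fun y => c * f y) (c • f') x := by
  rw [hasGradientAt_iff_hasFDerivAt] at hf ⊢
  simpa [map_smul] using hf.const_mul c

lemma mpg_hga_sum {ι : Type*} (s : Finset ι) {f : ι → E → ℝ} {f' : ι → E} {x : E}
    (hf : ∀ a ∈ s, HasGradientAt (f a) (f' a) x) :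
    HasGradientAt (fun y => ∑ a ∈ s, f a y) (∑ a ∈ s, f' a) x := by
  simp only [hasGradientAt_iff_hasFDerivAt] at hf ⊢
  simpa [map_sum] using HasFDerivAt.fun_sum hf

lemma mpg_hga_inner (v x : E) :
    HasGradientAt (fun y => ⟪y, v⟫_ℝ) v x := by
  rw [hasGradientAt_iff_hasFDerivAt]
  have : (fun y => ⟪y, v⟫_ℝ) = fun y => (toDual ℝ E v) y := by
    funext y; simp [toDual_apply_apply, real_inner_comm]
  rw [this]
  exact (toDual ℝ E v).hasFDerivAt

lemma mpg_hga_comp {f : E → ℝ} {f' : E} {x : E} {h : ℝ → ℝ} {h' : ℝ}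
    (hf : HasGradientAt f f' x) (hh : HasDerivAt h h' (f x)) :
    HasGradientAt (fun y => h (f y)) (h' • f') x := by
  rw [hasGradientAt_iff_hasFDerivAt] at hf ⊢
  have := (hh.hasFDerivAt).comp x hf
  refine this.congr_fderiv ?_
  ext y
  simp [toDual_apply_apply, real_inner_smul_left, mul_comm]

lemma mpg_hga_mul {f g : E → ℝ} {f' g' : E} {x : E}
    (hf : HasGradientAt f f' x) (hg : HasGradientAt g g' x) :
    HasGradientAt (fun y => f y * g y) (f x • g' + g x • f') x := by
  rw [hasGradientAt_iff_hasFDerivAt] at hf hg ⊢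
  simpa [map_add, map_smul] using hf.fun_mul hg

end helpers

/-- Matryoshka Policy Gradient theorem (ideal update, finite state
space): for an extended policy whose `i`-step component is the softmax of linear
preferences with parameter `θ^{(i)}` and whose other components do not depend on
`θ^{(i)}`,
`∇_{θ^{(i)}} J_n(π_θ) = Σ_s ρ^{(n−i)}(s) ∇_{θ^{(i)}} V^{(i)}_{π_θ}(s)
 = Σ_s ρ^{(n−i)}(s) Σ_a π^{(i)}(a|s) (Q^{(i)}(a,s) − τ log(π^{(i)}(a|s)/π̄(a|s)))
 ∇_{θ^{(i)}} log π^{(i)}(a|s)`,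
where `ρ^{(k)}` is the occupancy weight after `k` steps. -/
theorem matryoshka_policy_gradient_theorem
    {S A : Type*} [Fintype S] [Fintype A] [Nonempty S] [Nonempty A]
    (τ : ℝ) (hτ : 0 < τ)
    (pibar : S → A → ℝ) (hpibar_pos : ∀ s a, 0 < pibar s a)
    (hpibar_sum : ∀ s, ∑ a, pibar s a = 1)
    (r : A → S → ℝ)
    (p : S → A → S → ℝ) (hp_nonneg : ∀ s a s', 0 ≤ p s a s')
    (hp_sum : ∀ s a, ∑ s', p s a s' = 1)
    (n : ℕ) (i : ℕ) (hi : 1 ≤ i) (hin : i ≤ n)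
    (P : ℕ) (ψ : A → S → EuclideanSpace ℝ (Fin P))
    -- the extended policy, as a function of the parameter `θ^{(i)}` of its
    -- `i`-step component; the other components do not depend on `θ^{(i)}`
    (Pol : EuclideanSpace ℝ (Fin P) → ℕ → S → A → ℝ)
    (hPoli : ∀ θ s a, Pol θ i s a =
      pibar s a * Real.exp (⟪θ, ψ a s⟫ / τ) /
        ∑ a', pibar s a' * Real.exp (⟪θ, ψ a' s⟫ / τ))
    (hPolfix : ∀ θ θ' j, j ≠ i → Pol θ j = Pol θ' j)
    (hPol_pos : ∀ θ j s a, 0 < Pol θ j s a) (hPol_sum : ∀ θ j s, ∑ a, Pol θ j s a = 1)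
    -- value and Q functions of the extended policy, defined recursively
    (V : EuclideanSpace ℝ (Fin P) → ℕ → S → ℝ)
    (Q : EuclideanSpace ℝ (Fin P) → ℕ → A → S → ℝ)
    (hV0 : ∀ θ s, V θ 0 s = 0)
    (hQ : ∀ θ j a s, Q θ (j + 1) a s = r a s + ∑ s', p s a s' * V θ j s')
    (hV : ∀ θ j s, V θ (j + 1) s = ∑ a, Pol θ (j + 1) s a *
      (Q θ (j + 1) a s - τ * Real.log (Pol θ (j + 1) s a / pibar s a)))
    -- occupancy weights (uniform unnormalized initial distribution)
    (ρ : EuclideanSpace ℝ (Fin P) → ℕ → S → ℝ)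
    (hρ0 : ∀ θ s, ρ θ 0 s = 1)
    (hρ : ∀ θ k s', ρ θ (k + 1) s' =
      ∑ s, ρ θ k s * ∑ a, Pol θ (n - k) s a * p s a s')
    (θ : EuclideanSpace ℝ (Fin P)) :
    gradient (fun θ' => ∑ s, V θ' n s) θ
        = ∑ s, ρ θ (n - i) s • gradient (fun θ' => V θ' i s) θ ∧
      gradient (fun θ' => ∑ s, V θ' n s) θ
        = ∑ s, ρ θ (n - i) s •
            ∑ a, (Pol θ i s a * (Q θ i a s - τ * Real.log (Pol θ i s a / pibar s a))) •
              gradient (fun θ' => Real.log (Pol θ' i s a)) θ := by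
  -- constancy of V below level i
  have hVconst : ∀ j, j < i → ∀ θ' s, V θ' j s = V θ j s := by
    intro j
    induction j with
    | zero => intro _ θ' s; rw [hV0, hV0]
    | succ j ih =>
      intro hj θ' s
      rw [hV θ' j s, hV θ j s]
      have hPol : Pol θ' (j+1) = Pol θ (j+1) := hPolfix θ' θ (j+1) (by omega)
      refine Finset.sum_congr rfl fun a _ => ?_
      rw [hPol, hQ, hQ]
      have : ∑ s', p s a s' * V θ' j s' = ∑ s', p s a s' * V θ j s' :=
        Finset.sum_congr rfl fun s' _ => by rw [ih (by omega) θ' s']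
      rw [this]
  have hQconst : ∀ θ' a s, Q θ' i a s = Q θ i a s := by
    intro θ' a s
    obtain ⟨i₀, rfl⟩ : ∃ i₀, i = i₀ + 1 := ⟨i - 1, by omega⟩
    rw [hQ, hQ]
    have : ∑ s', p s a s' * V θ' i₀ s' = ∑ s', p s a s' * V θ i₀ s' :=
      Finset.sum_congr rfl fun s' _ => by rw [hVconst i₀ (by omega) θ' s']
    rw [this]
  -- the partition function
  set Z : S → EuclideanSpace ℝ (Fin P) → ℝ := fun s θ' => ∑ a', pibar s a' * Real.exp (⟪θ', ψ a' s⟫ / τ)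
    with hZ
  have hZpos : ∀ s θ', 0 < Z s θ' :=
    fun s θ' => Finset.sum_pos (fun a _ => mul_pos (hpibar_pos s a) (Real.exp_pos _))
      Finset.univ_nonempty
  -- gradient of log of the i-step policy
  set Gl : S → A → EuclideanSpace ℝ (Fin P) := fun s a =>
    τ⁻¹ • ψ a s - ∑ b, (Pol θ i s b * τ⁻¹) • ψ b s with hGl
  have hZgrad : ∀ s, HasGradientAt (Z s)
      (∑ b, (pibar s b * Real.exp (⟪θ, ψ b s⟫ / τ) * τ⁻¹) • ψ b s) θ := by
    intro s
    rw [hZ]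
    refine mpg_hga_sum Finset.univ fun b _ => ?_
    have h1 : HasGradientAt (fun y : EuclideanSpace ℝ (Fin P) => τ⁻¹ * ⟪y, ψ b s⟫)
        (τ⁻¹ • ψ b s) θ := mpg_hga_const_mul _ (mpg_hga_inner (ψ b s) θ)
    have h2 := mpg_hga_comp h1 (Real.hasDerivAt_exp _)
    have h3 := mpg_hga_const_mul (pibar s b) h2
    have hfun : (fun y : EuclideanSpace ℝ (Fin P) => pibar s b * Real.exp (⟪y, ψ b s⟫ / τ))
        = fun y => pibar s b * Real.exp (τ⁻¹ * ⟪y, ψ b s⟫) := by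
      funext y; rw [div_eq_inv_mul]
    have hvec : (pibar s b * Real.exp (⟪θ, ψ b s⟫ / τ) * τ⁻¹) • ψ b s
        = pibar s b • Real.exp (τ⁻¹ * ⟪θ, ψ b s⟫) • τ⁻¹ • ψ b s := by
      rw [smul_smul, smul_smul, div_eq_inv_mul, mul_assoc]
    rw [hfun, hvec]; exact h3
  have hlog : ∀ s a, HasGradientAt (fun θ' => Real.log (Pol θ' i s a)) (Gl s a) θ := by
    intro s a
    have hfun : (fun θ' => Real.log (Pol θ' i s a))
        = fun θ' => (Real.log (pibar s a) + τ⁻¹ * ⟪θ', ψ a s⟫) - Real.log (Z s θ') := by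
      funext θ'
      rw [hPoli θ' s a]
      have hZval : ∑ a', pibar s a' * Real.exp (⟪θ', ψ a' s⟫ / τ) = Z s θ' := by rw [hZ]
      rw [hZval, Real.log_div (ne_of_gt (mul_pos (hpibar_pos s a) (Real.exp_pos _))) (ne_of_gt (hZpos s θ')),
        Real.log_mul (ne_of_gt (hpibar_pos s a)) (ne_of_gt (Real.exp_pos _)),
        Real.log_exp, div_eq_inv_mul]
    rw [hfun]
    have h1 : HasGradientAt (fun θ' : EuclideanSpace ℝ (Fin P) =>
        Real.log (pibar s a) + τ⁻¹ * ⟪θ', ψ a s⟫) ((0 : EuclideanSpace ℝ (Fin P)) + τ⁻¹ • ψ a s) θ :=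
      mpg_hga_add (hasGradientAt_const _ _) (mpg_hga_const_mul _ (mpg_hga_inner (ψ a s) θ))
    have h2 : HasGradientAt (fun θ' => Real.log (Z s θ'))
        ((Z s θ)⁻¹ • ∑ b, (pibar s b * Real.exp (⟪θ, ψ b s⟫ / τ) * τ⁻¹) • ψ b s) θ :=
      mpg_hga_comp (hZgrad s) (Real.hasDerivAt_log (ne_of_gt (hZpos s θ)))
    have h3 := mpg_hga_sub h1 h2
    have hvec : (0 : EuclideanSpace ℝ (Fin P)) + τ⁻¹ • ψ a s -
        (Z s θ)⁻¹ • ∑ b, (pibar s b * Real.exp (⟪θ, ψ b s⟫ / τ) * τ⁻¹) • ψ b s = Gl s a := by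
      rw [hGl, zero_add, Finset.smul_sum]
      congr 1
      refine Finset.sum_congr rfl fun b _ => ?_
      rw [smul_smul, hPoli θ s b]
      have hZval : ∑ a', pibar s a' * Real.exp (⟪θ, ψ a' s⟫ / τ) = Z s θ := by rw [hZ]
      rw [hZval]
      congr 1
      field_simp
    rwa [hvec] at h3
  have hPolGrad : ∀ s a,
      HasGradientAt (fun θ' => Pol θ' i s a) (Pol θ i s a • Gl s a) θ := by
    intro s a
    have hfun : (fun θ' => Pol θ' i s a)
        = fun θ' => Real.exp (Real.log (Pol θ' i s a)) := by
      funext θ'; rw [Real.exp_log (hPol_pos θ' i s a)]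
    rw [hfun]
    have := mpg_hga_comp (hlog s a) (Real.hasDerivAt_exp (Real.log (Pol θ i s a)))
    rwa [Real.exp_log (hPol_pos θ i s a)] at this
  have hsum0 : ∀ s, ∑ a, Pol θ i s a • Gl s a = 0 := by
    intro s
    rw [hGl]
    simp only [smul_sub]
    rw [Finset.sum_sub_distrib]
    have e1 : ∑ a, Pol θ i s a • τ⁻¹ • ψ a s = ∑ b, (Pol θ i s b * τ⁻¹) • ψ b s :=
      Finset.sum_congr rfl fun a _ => by rw [smul_smul]
    have e2 : ∑ a, Pol θ i s a • ∑ b, (Pol θ i s b * τ⁻¹) • ψ b s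
        = ∑ b, (Pol θ i s b * τ⁻¹) • ψ b s := by
      rw [← Finset.sum_smul, hPol_sum θ i s, one_smul]
    rw [e1, e2, sub_self]
  set gVi : S → EuclideanSpace ℝ (Fin P) := fun s =>
    ∑ a, (Pol θ i s a * (Q θ i a s - τ * Real.log (Pol θ i s a / pibar s a))) • Gl s a
    with hgVidef
  have hVi : ∀ s, HasGradientAt (fun θ' => V θ' i s) (gVi s) θ := by
    intro s
    obtain ⟨i₀, hi₀⟩ : ∃ i₀, i = i₀ + 1 := ⟨i - 1, by omega⟩
    have hfun : (fun θ' => V θ' i s) = fun θ' =>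
        ∑ a, Pol θ' i s a *
          ((Q θ i a s + τ * Real.log (pibar s a)) - τ * Real.log (Pol θ' i s a)) := by
      funext θ'
      have h0 : V θ' i s
          = ∑ a, Pol θ' i s a * (Q θ' i a s - τ * Real.log (Pol θ' i s a / pibar s a)) := by
        rw [hi₀]; exact hV θ' i₀ s
      rw [h0]
      refine Finset.sum_congr rfl fun a _ => ?_
      rw [hQconst θ' a s,
        Real.log_div (ne_of_gt (hPol_pos θ' i s a)) (ne_of_gt (hpibar_pos s a))]
      ring
    rw [hfun]
    have hterm := fun (a : A) (_ : a ∈ Finset.univ) =>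
      mpg_hga_mul (hPolGrad s a)
        (mpg_hga_sub (hasGradientAt_const θ (Q θ i a s + τ * Real.log (pibar s a)))
          (mpg_hga_const_mul τ (hlog s a)))
    have h := mpg_hga_sum Finset.univ hterm
    have hvec : ∑ a, (Pol θ i s a • ((0 : EuclideanSpace ℝ (Fin P)) - τ • Gl s a)
        + ((Q θ i a s + τ * Real.log (pibar s a)) - τ * Real.log (Pol θ i s a)) •
          (Pol θ i s a • Gl s a)) = gVi s := by
      rw [Finset.sum_add_distrib, hgVidef]
      have e1 : ∑ a, Pol θ i s a • ((0 : EuclideanSpace ℝ (Fin P)) - τ • Gl s a)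
          = -(τ • ∑ a, Pol θ i s a • Gl s a) := by
        rw [Finset.smul_sum]
        rw [← Finset.sum_neg_distrib]
        refine Finset.sum_congr rfl fun a _ => ?_
        rw [zero_sub, smul_neg, smul_comm]
      rw [e1, hsum0 s, smul_zero, neg_zero, zero_add]
      refine Finset.sum_congr rfl fun a _ => ?_
      rw [smul_smul]
      congr 1
      rw [Real.log_div (ne_of_gt (hPol_pos θ i s a)) (ne_of_gt (hpibar_pos s a))]
      ring
    rwa [hvec] at h
  -- gradients of higher V's
  set gV : ℕ → S → EuclideanSpace ℝ (Fin P) := fun m => Nat.rec (motive := fun _ => S → EuclideanSpace ℝ (Fin P)) gVi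
    (fun m ih s => ∑ a, Pol θ (i + m + 1) s a • ∑ s', p s a s' • ih s') m with hgV
  have hgVsucc : ∀ m s, gV (m + 1) s
      = ∑ a, Pol θ (i + m + 1) s a • ∑ s', p s a s' • gV m s' := fun m s => rfl
  have hgVgrad : ∀ m, i + m ≤ n → ∀ s,
      HasGradientAt (fun θ' => V θ' (i + m) s) (gV m s) θ := by
    intro m
    induction m with
    | zero => intro _ s; exact hVi s
    | succ m ih =>
      intro hmn s
      have hfun : (fun θ' => V θ' (i + m + 1) s) = fun θ' =>
          ∑ a, Pol θ (i + m + 1) s a *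
            ((r a s - τ * Real.log (Pol θ (i + m + 1) s a / pibar s a))
              + ∑ s', p s a s' * V θ' (i + m) s') := by
        funext θ'
        rw [hV θ' (i + m) s]
        refine Finset.sum_congr rfl fun a _ => ?_
        rw [hQ θ' (i + m) a s,
          show Pol θ' (i + m + 1) = Pol θ (i + m + 1) from hPolfix θ' θ _ (by omega)]
        ring
      have h := mpg_hga_sum Finset.univ fun (a : A) (_ : a ∈ Finset.univ) =>
        mpg_hga_const_mul (Pol θ (i + m + 1) s a)
          (mpg_hga_add
            (hasGradientAt_const θ
              (r a s - τ * Real.log (Pol θ (i + m + 1) s a / pibar s a)))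
            (mpg_hga_sum Finset.univ fun (s' : S) (_ : s' ∈ Finset.univ) =>
              mpg_hga_const_mul (p s a s') (ih (by omega) s')))
      rw [← hfun] at h
      have hvec : ∑ a, Pol θ (i + m + 1) s a •
          ((0 : EuclideanSpace ℝ (Fin P)) + ∑ s', p s a s' • gV m s') = gV (m + 1) s := by
        rw [hgVsucc]
        exact Finset.sum_congr rfl fun a _ => by rw [zero_add]
      rwa [hvec] at h
  have halg : ∀ m k, k + m = n - i →
      ∑ s, ρ θ k s • gV m s = ∑ s, ρ θ (n - i) s • gVi s := by
    intro m
    induction m with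
    | zero =>
      intro k hk
      have hk' : k = n - i := by omega
      rw [hk']
      rfl
    | succ m ih =>
      intro k hk
      have hnk : n - k = i + m + 1 := by omega
      have step : ∑ s, ρ θ k s • gV (m + 1) s = ∑ s', ρ θ (k + 1) s' • gV m s' := by
        have lhs : ∑ s, ρ θ k s • gV (m + 1) s
            = ∑ s, ∑ s', ∑ a, (ρ θ k s * (Pol θ (i + m + 1) s a * p s a s')) • gV m s' := by
          refine Finset.sum_congr rfl fun s _ => ?_
          rw [hgVsucc, Finset.smul_sum]
          rw [show (∑ a, ρ θ k s • Pol θ (i + m + 1) s a • ∑ s', p s a s' • gV m s')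
              = ∑ a, ∑ s', (ρ θ k s * (Pol θ (i + m + 1) s a * p s a s')) • gV m s' from
            Finset.sum_congr rfl fun a _ => by
              rw [Finset.smul_sum, Finset.smul_sum]
              exact Finset.sum_congr rfl fun s' _ => by rw [smul_smul, smul_smul, mul_assoc]]
          exact Finset.sum_comm
        have rhs : ∑ s', ρ θ (k + 1) s' • gV m s'
            = ∑ s', ∑ s, ∑ a, (ρ θ k s * (Pol θ (i + m + 1) s a * p s a s')) • gV m s' := by
          refine Finset.sum_congr rfl fun s' _ => ?_
          rw [hρ θ k s', hnk, Finset.sum_smul]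
          refine Finset.sum_congr rfl fun s _ => ?_
          rw [Finset.mul_sum, Finset.sum_smul]
        rw [lhs, rhs, Finset.sum_comm]
      rw [step]
      exact ih (k + 1) (by omega)
  have htot : gradient (fun θ' => ∑ s, V θ' n s) θ = ∑ s, ρ θ (n - i) s • gVi s := by
    have h1 : HasGradientAt (fun θ' => ∑ s, V θ' n s) (∑ s, gV (n - i) s) θ := by
      have := mpg_hga_sum Finset.univ (fun s _ => hgVgrad (n - i) (by omega) s)
      have hn : i + (n - i) = n := by omega
      rwa [hn] at this
    rw [h1.gradient]
    rw [← halg (n - i) 0 (by omega)]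
    refine Finset.sum_congr rfl fun s _ => by rw [hρ0, one_smul]
  constructor
  · rw [htot]
    refine Finset.sum_congr rfl fun s _ => ?_
    rw [(hVi s).gradient]
  · rw [htot]
    refine Finset.sum_congr rfl fun s _ => ?_
    congr 1
    refine Finset.sum_congr rfl fun a _ => ?_
    rw [(hlog s a).gradient]
end

section
/- Exact gradient-pairing identity for MPG (finite state space): let π_θ be an extended policy with softmax-linear components and disjoint parameters, let 1 ≤ m ≤ n, and suppose π^{(k)}_{θ^{(k)}} = π*^{(k)} for all 1 ≤ k ≤ m−1. Then for every (a,s) ∈ A × S, ⟨∇_{θ^{(m)}} J_n(π_θ), ∇_{θ^{(m)}} log π^{(m)}_{θ^{(m)}}(a|s)⟩ = −(1/τ) Σ_{s'∈S} ρ^{(n−m)}(s') Σ_{a'∈A} π^{(m)}(a'|s') ( log(π^{(m)}(a'|s')/π*^{(m)}(a'|s')) − D_KL(π^{(m)}‖π*^{(m)})(s') ) ( Θ^{(m)}((a,s),(a',s')) − Σ_{a''∈A} π^{(m)}(a''|s) Θ^{(m)}((a'',s),(a',s')) ), where Θ^{(m)}((a,s),(a',s')) := ⟨ψ^{(m)}(a,s),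 ψ^{(m)}(a',s')⟩. -/
open scoped RealInnerProductSpace
set_option linter.unusedSectionVars false
set_option linter.unusedVariables false
set_option maxHeartbeats 2000000

section Aux

variable {F : Type*} [NormedAddCommGroup F] [InnerProductSpace ℝ F] [CompleteSpace F]
variable {A : Type*} [Fintype A]

private lemma aux_toDual_eq (w : F) :
    (InnerProductSpace.toDual ℝ F w : F →L[ℝ] ℝ) = innerSL ℝ w := by
  ext y; simp [InnerProductSpace.toDual_apply_apply]

private lemma aux_hasGradientAt {f : F → ℝ} {w x : F} (h : HasFDerivAt f (innerSL ℝ w) x) :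
    HasGradientAt f w x := by
  rw [hasGradientAt_iff_hasFDerivAt, aux_toDual_eq]; exact h

private lemma aux_inner_fderiv (v x : F) : HasFDerivAt (fun y : F => ⟪y, v⟫) (innerSL ℝ v) x := by
  have : (fun y : F => ⟪y, v⟫) = fun y => innerSL ℝ v y := by
    funext y; rw [innerSL_apply_apply, real_inner_comm]
  rw [this]; exact (innerSL ℝ v).hasFDerivAt

private lemma aux_exp_fderiv (c τ : ℝ) (v x : F) :
    HasFDerivAt (fun y : F => c * Real.exp (⟪y, v⟫ / τ))
      ((c * Real.exp (⟪x, v⟫ / τ) / τ) • innerSL ℝ v) x := by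
  have h1 : HasFDerivAt (fun y : F => ⟪y, v⟫ / τ) (τ⁻¹ • innerSL ℝ v) x := by
    simpa [div_eq_inv_mul, smul_smul] using (aux_inner_fderiv v x).const_mul τ⁻¹
  have h2 := (h1.exp).const_mul c
  refine h2.congr_fderiv ?_
  symm
  ext y
  simp only [ContinuousLinearMap.smul_apply, innerSL_apply_apply, smul_eq_mul]
  ring

private lemma aux_Z_fderiv (c : A → ℝ) (τ : ℝ) (ψ : A → F) (x : F) :
    HasFDerivAt (fun y : F => ∑ b, c b * Real.exp (⟪y, ψ b⟫ / τ))
      (∑ b, (c b * Real.exp (⟪x, ψ b⟫ / τ) / τ) • innerSL ℝ (ψ b)) x :=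
  HasFDerivAt.fun_sum fun b _ => aux_exp_fderiv (c b) τ (ψ b) x

private lemma aux_Z_pos (c : A → ℝ) (hc : ∀ b, 0 < c b) (τ : ℝ) (ψ : A → F) [Nonempty A]
    (y : F) : 0 < ∑ b, c b * Real.exp (⟪y, ψ b⟫ / τ) :=
  Finset.sum_pos (fun b _ => mul_pos (hc b) (Real.exp_pos _)) Finset.univ_nonempty

private lemma aux_logpol_grad [Nonempty A] (c : A → ℝ) (hc : ∀ b, 0 < c b) (τ : ℝ) (hτ : 0 < τ)
    (ψ : A → F) (a : A) (x : F) :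
    HasGradientAt
      (fun y : F =>
        Real.log (c a * Real.exp (⟪y, ψ a⟫ / τ) / ∑ b, c b * Real.exp (⟪y, ψ b⟫ / τ)))
      (τ⁻¹ • (ψ a - ∑ b, (c b * Real.exp (⟪x, ψ b⟫ / τ) /
        ∑ b', c b' * Real.exp (⟪x, ψ b'⟫ / τ)) • ψ b)) x := by
  apply aux_hasGradientAt
  have hZpos : ∀ y : F, 0 < ∑ b, c b * Real.exp (⟪y, ψ b⟫ / τ) := aux_Z_pos c hc τ ψ
  have hfun : (fun y : F =>
        Real.log (c a * Real.exp (⟪y, ψ a⟫ / τ) / ∑ b, c b * Real.exp (⟪y, ψ b⟫ / τ)))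
      = fun y : F => Real.log (c a) + ⟪y, ψ a⟫ / τ
          - Real.log (∑ b, c b * Real.exp (⟪y, ψ b⟫ / τ)) := by
    funext y
    rw [Real.log_div (mul_pos (hc a) (Real.exp_pos _)).ne' (hZpos y).ne',
      Real.log_mul (hc a).ne' (Real.exp_pos _).ne', Real.log_exp]
  rw [hfun]
  have h1 : HasFDerivAt (fun y : F => ⟪y, ψ a⟫ / τ) (τ⁻¹ • innerSL ℝ (ψ a)) x := by
    simpa [div_eq_inv_mul, smul_smul] using (aux_inner_fderiv (ψ a) x).const_mul τ⁻¹
  have h2 := ((aux_Z_fderiv c τ ψ x).log (hZpos x).ne')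
  have h3 := ((hasFDerivAt_const (Real.log (c a)) x).add h1).sub h2
  refine h3.congr_fderiv ?_
  symm
  set Z := ∑ b', c b' * Real.exp (⟪x, ψ b'⟫ / τ) with hZ
  ext y
  simp only [ContinuousLinearMap.smul_apply, ContinuousLinearMap.coe_sub',
    ContinuousLinearMap.add_apply, ContinuousLinearMap.coe_sum', Pi.sub_apply, Finset.sum_apply,
    ContinuousLinearMap.coe_smul', Pi.smul_apply, innerSL_apply_apply, smul_eq_mul,
    ContinuousLinearMap.zero_apply, inner_sub_left, inner_smul_left, sum_inner,
    RCLike.inner_apply, conj_trivial]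
  rw [mul_sub, Finset.mul_sum, Finset.mul_sum]
  have hZne : Z ≠ 0 := (hZpos x).ne'
  congr 1
  · exact (zero_add _).symm
  · apply Finset.sum_congr rfl
    intro b _
    rw [div_eq_mul_inv, div_eq_mul_inv]
    ring

private lemma aux_V_grad [Nonempty A] (c : A → ℝ) (hc : ∀ b, 0 < c b) (τ : ℝ) (hτ : 0 < τ)
    (ψ : A → F) (K : A → ℝ) (x : F) :
    HasGradientAt
      (fun y : F => τ * Real.log (∑ b, c b * Real.exp (⟪y, ψ b⟫ / τ))
        + ∑ a, (c a * Real.exp (⟪y, ψ a⟫ / τ) / ∑ b, c b * Real.exp (⟪y, ψ b⟫ / τ)) *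
            (K a - ⟪y, ψ a⟫))
      (τ⁻¹ • ∑ b, ((c b * Real.exp (⟪x, ψ b⟫ / τ) / ∑ b', c b' * Real.exp (⟪x, ψ b'⟫ / τ)) *
          ((K b - ⟪x, ψ b⟫) -
            ∑ a, (c a * Real.exp (⟪x, ψ a⟫ / τ) / ∑ b', c b' * Real.exp (⟪x, ψ b'⟫ / τ)) *
              (K a - ⟪x, ψ a⟫))) • ψ b) x := by
  apply aux_hasGradientAt
  have hZpos : ∀ y : F, 0 < ∑ b, c b * Real.exp (⟪y, ψ b⟫ / τ) := aux_Z_pos c hc τ ψ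
  have hfun : (fun y : F => τ * Real.log (∑ b, c b * Real.exp (⟪y, ψ b⟫ / τ))
        + ∑ a, (c a * Real.exp (⟪y, ψ a⟫ / τ) / ∑ b, c b * Real.exp (⟪y, ψ b⟫ / τ)) *
            (K a - ⟪y, ψ a⟫))
      = fun y : F => τ * Real.log (∑ b, c b * Real.exp (⟪y, ψ b⟫ / τ))
        + (∑ b, c b * Real.exp (⟪y, ψ b⟫ / τ))⁻¹ *
            ∑ a, c a * Real.exp (⟪y, ψ a⟫ / τ) * (K a - ⟪y, ψ a⟫) := by
    funext y
    congr 1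
    rw [Finset.mul_sum]
    exact Finset.sum_congr rfl fun b _ => by rw [div_eq_mul_inv]; ring
  rw [hfun]
  have hlogZ := ((aux_Z_fderiv c τ ψ x).log (hZpos x).ne').const_mul τ
  have hinv := (hasDerivAt_inv (hZpos x).ne').comp_hasFDerivAt x (aux_Z_fderiv c τ ψ x)
  have hN : HasFDerivAt (fun y : F => ∑ a, c a * Real.exp (⟪y, ψ a⟫ / τ) * (K a - ⟪y, ψ a⟫))
      (∑ b, ((c b * Real.exp (⟪x, ψ b⟫ / τ)) • (0 - innerSL ℝ (ψ b)) +
        (K b - ⟪x, ψ b⟫) • ((c b * Real.exp (⟪x, ψ b⟫ / τ) / τ) • innerSL ℝ (ψ b)))) x :=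
    HasFDerivAt.fun_sum fun b _ =>
      (aux_exp_fderiv (c b) τ (ψ b) x).mul
        ((hasFDerivAt_const (K b) x).sub (aux_inner_fderiv (ψ b) x))
  have h := hlogZ.add (hinv.mul hN)
  refine h.congr_fderiv ?_
  symm
  ext y
  simp only [ContinuousLinearMap.smul_apply, ContinuousLinearMap.add_apply,
    ContinuousLinearMap.coe_sum', ContinuousLinearMap.coe_smul', ContinuousLinearMap.coe_sub',
    Finset.sum_apply, Pi.smul_apply, Pi.sub_apply, innerSL_apply_apply, smul_eq_mul,
    ContinuousLinearMap.zero_apply, inner_smul_left, sum_inner, RCLike.inner_apply, conj_trivial]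
  simp only [Function.comp_apply]
  set Z := ∑ b' : A, c b' * Real.exp (⟪x, ψ b'⟫ / τ) with hZdef
  set μ := ∑ a, (c a * Real.exp (⟪x, ψ a⟫ / τ) / Z) * (K a - ⟪x, ψ a⟫) with hμ
  set N := ∑ a, c a * Real.exp (⟪x, ψ a⟫ / τ) * (K a - ⟪x, ψ a⟫) with hN2
  have hZne : Z ≠ 0 := (hZpos x).ne'
  have hNZ : N = Z * μ := by
    rw [hμ, Finset.mul_sum]
    exact Finset.sum_congr rfl fun b _ => by field_simp
  simp only [Finset.mul_sum, ← Finset.sum_add_distrib]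
  refine Finset.sum_congr rfl fun b _ => ?_
  rw [hNZ]
  field_simp
  ring

/-- combine gradients of a weighted finite sum plus a constant -/
private lemma aux_grad_combine {ι : Type*} (t : Finset ι) (C : ℝ) (w : ι → ℝ)
    (g : ι → F → ℝ) (G : ι → F) (x : F) (h : ∀ i ∈ t, HasGradientAt (g i) (G i) x) :
    HasGradientAt (fun y => C + ∑ i ∈ t, w i * g i y) (∑ i ∈ t, w i • G i) x := by
  apply aux_hasGradientAt
  have h' := HasFDerivAt.fun_sum (fun i hi => ((h i hi).hasFDerivAt.const_mul (w i)))
  have h2 := (hasFDerivAt_const C x).add h'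
  refine h2.congr_fderiv ?_
  symm
  ext y
  simp only [ContinuousLinearMap.add_apply, ContinuousLinearMap.coe_sum',
    ContinuousLinearMap.coe_smul', Finset.sum_apply, Pi.smul_apply, innerSL_apply_apply,
    smul_eq_mul, ContinuousLinearMap.zero_apply, sum_inner, inner_smul_left,
    RCLike.inner_apply, conj_trivial, aux_toDual_eq]
  rw [zero_add]

end Aux

/-- Exact gradient-pairing identity for MPG (finite state space):
if the components `π^{(1)},…,π^{(m−1)}` coincide with the optimal ones, then for
every `(a,s)`,
`⟪∇_{θ^{(m)}} J_n(π_θ), ∇_{θ^{(m)}} log π^{(m)}(a|s)⟫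
 = −(1/τ) Σ_{s'} ρ^{(n−m)}(s') Σ_{a'} π^{(m)}(a'|s')
   (log(π^{(m)}(a'|s')/π*^{(m)}(a'|s')) − D_KL(π^{(m)}‖π*^{(m)})(s'))
   (Θ^{(m)}((a,s),(a',s')) − Σ_{a''} π^{(m)}(a''|s) Θ^{(m)}((a'',s),(a',s')))`. -/
theorem mpg_gradient_pairing_identity
    {S A : Type*} [Fintype S] [Fintype A] [Nonempty S] [Nonempty A]
    (τ : ℝ) (hτ : 0 < τ)
    (pibar : S → A → ℝ) (hpibar_pos : ∀ s a, 0 < pibar s a)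
    (hpibar_sum : ∀ s, ∑ a, pibar s a = 1)
    (r : A → S → ℝ)
    (p : S → A → S → ℝ) (hp_nonneg : ∀ s a s', 0 ≤ p s a s')
    (hp_sum : ∀ s a, ∑ s', p s a s' = 1)
    (n : ℕ) (m : ℕ) (hm : 1 ≤ m) (hmn : m ≤ n)
    (P : ℕ) (ψ : A → S → EuclideanSpace ℝ (Fin P))
    -- the extended policy, as a function of the parameter `θ^{(m)}` of its
    -- `m`-step component; the other components do not depend on `θ^{(m)}`
    (Pol : EuclideanSpace ℝ (Fin P) → ℕ → S → A → ℝ)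
    (hPolm : ∀ θ s a, Pol θ m s a =
      pibar s a * Real.exp (⟪θ, ψ a s⟫ / τ) /
        ∑ a', pibar s a' * Real.exp (⟪θ, ψ a' s⟫ / τ))
    (hPolfix : ∀ θ θ' j, j ≠ m → Pol θ j = Pol θ' j)
    (hPol_pos : ∀ θ j s a, 0 < Pol θ j s a) (hPol_sum : ∀ θ j s, ∑ a, Pol θ j s a = 1)
    -- value and Q functions of the extended policy, defined recursively
    (V : EuclideanSpace ℝ (Fin P) → ℕ → S → ℝ)
    (Q : EuclideanSpace ℝ (Fin P) → ℕ → A → S → ℝ)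
    (hV0 : ∀ θ s, V θ 0 s = 0)
    (hQ : ∀ θ j a s, Q θ (j + 1) a s = r a s + ∑ s', p s a s' * V θ j s')
    (hV : ∀ θ j s, V θ (j + 1) s = ∑ a, Pol θ (j + 1) s a *
      (Q θ (j + 1) a s - τ * Real.log (Pol θ (j + 1) s a / pibar s a)))
    -- occupancy weights (uniform unnormalized initial distribution)
    (ρ : EuclideanSpace ℝ (Fin P) → ℕ → S → ℝ)
    (hρ0 : ∀ θ s, ρ θ 0 s = 1)
    (hρ : ∀ θ k s', ρ θ (k + 1) s' =
      ∑ s, ρ θ k s * ∑ a, Pol θ (n - k) s a * p s a s')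
    -- optimal extended policy and its value and Q functions, defined recursively
    (Vstar : ℕ → S → ℝ) (Qstar : ℕ → A → S → ℝ) (pistar : ℕ → S → A → ℝ)
    (hVstar0 : ∀ s, Vstar 0 s = 0)
    (hQstar : ∀ j a s, Qstar (j + 1) a s = r a s + ∑ s', p s a s' * Vstar j s')
    (hpistar : ∀ j s a, pistar (j + 1) s a =
      pibar s a * Real.exp (Qstar (j + 1) a s / τ) /
        ∑ a', pibar s a' * Real.exp (Qstar (j + 1) a' s / τ))
    (hVstar : ∀ j s, Vstar (j + 1) s = ∑ a, pistar (j + 1) s a *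
      (Qstar (j + 1) a s - τ * Real.log (pistar (j + 1) s a / pibar s a)))
    -- the kernel of the `m`-step feature map
    (Θk : A × S → A × S → ℝ)
    (hΘk : ∀ x y : A × S, Θk x y = ⟪ψ x.1 x.2, ψ y.1 y.2⟫)
    (θ : EuclideanSpace ℝ (Fin P))
    -- the lower-step policies are optimal
    (hlow : ∀ k, 1 ≤ k → k ≤ m - 1 → Pol θ k = pistar k)
    (a : A) (s : S) :
    ⟪gradient (fun θ' => ∑ s', V θ' n s') θ,
        gradient (fun θ' => Real.log (Pol θ' m s a)) θ⟫
      = -(1 / τ) * ∑ s', ρ θ (n - m) s' * ∑ a', Pol θ m s' a' *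
          (Real.log (Pol θ m s' a' / pistar m s' a')
            - ∑ b, Pol θ m s' b * Real.log (Pol θ m s' b / pistar m s' b)) *
          (Θk (a, s) (a', s') - ∑ a'', Pol θ m s a'' * Θk (a'', s) (a', s')) := by
  have hm1 : m - 1 + 1 = m := Nat.succ_pred_eq_of_pos hm
  -- Step A1: lower V's are optimal
  have hVlow : ∀ j, j ≤ m - 1 → ∀ (θ' : EuclideanSpace ℝ (Fin P)) s₀, V θ' j s₀ = Vstar j s₀ := by
    intro j
    induction j with
    | zero => intro _ θ' s₀; rw [hV0, hVstar0]
    | succ j ih =>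
      intro hj θ' s₀
      have hj' : j ≤ m - 1 := le_trans (Nat.le_succ j) hj
      have hne : j + 1 ≠ m := by omega
      have hPol' : Pol θ' (j + 1) = pistar (j + 1) := by
        rw [← hPolfix θ θ' (j + 1) hne]
        exact hlow (j + 1) (by omega) hj
      rw [hV, hVstar]
      refine Finset.sum_congr rfl fun b _ => ?_
      rw [hPol', hQ, hQstar]
      have : ∑ s'', p s₀ b s'' * V θ' j s'' = ∑ s'', p s₀ b s'' * Vstar j s'' :=
        Finset.sum_congr rfl fun s'' _ => by rw [ih hj' θ' s'']
      rw [this]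
  -- Step A2: Q at level m is optimal
  have hQm : ∀ (θ' : EuclideanSpace ℝ (Fin P)) b s₀, Q θ' m b s₀ = Qstar m b s₀ := by
    intro θ' b s₀
    rw [← hm1, hQ, hQstar]
    congr 1
    exact Finset.sum_congr rfl fun s'' _ => by rw [hVlow (m - 1) le_rfl θ' s'']
  -- Step A4: explicit form of V at level m
  have hVm : ∀ (θ' : EuclideanSpace ℝ (Fin P)) s₀, V θ' m s₀ =
      τ * Real.log (∑ b, pibar s₀ b * Real.exp (⟪θ', ψ b s₀⟫ / τ))
        + ∑ b, (pibar s₀ b * Real.exp (⟪θ', ψ b s₀⟫ / τ) /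
            ∑ b', pibar s₀ b' * Real.exp (⟪θ', ψ b' s₀⟫ / τ)) *
            (Qstar m b s₀ - ⟪θ', ψ b s₀⟫) := by
    intro θ' s₀
    have hZpos : (0:ℝ) < ∑ b, pibar s₀ b * Real.exp (⟪θ', ψ b s₀⟫ / τ) :=
      Finset.sum_pos (fun b _ => mul_pos (hpibar_pos s₀ b) (Real.exp_pos _)) Finset.univ_nonempty
    have hstep : V θ' m s₀ = ∑ b, Pol θ' m s₀ b *
        (Q θ' m b s₀ - τ * Real.log (Pol θ' m s₀ b / pibar s₀ b)) := by
      conv_lhs => rw [← hm1, hV]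
      simp only [hm1]
    rw [hstep]
    have hterm : ∀ b, Pol θ' m s₀ b *
        (Q θ' m b s₀ - τ * Real.log (Pol θ' m s₀ b / pibar s₀ b))
        = (pibar s₀ b * Real.exp (⟪θ', ψ b s₀⟫ / τ) /
            ∑ b', pibar s₀ b' * Real.exp (⟪θ', ψ b' s₀⟫ / τ)) *
            (Qstar m b s₀ - ⟪θ', ψ b s₀⟫)
          + (τ * Real.log (∑ b', pibar s₀ b' * Real.exp (⟪θ', ψ b' s₀⟫ / τ))) * Pol θ' m s₀ b := by
      intro b
      have hlog : Real.log (Pol θ' m s₀ b / pibar s₀ b)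
          = ⟪θ', ψ b s₀⟫ / τ - Real.log (∑ b', pibar s₀ b' * Real.exp (⟪θ', ψ b' s₀⟫ / τ)) := by
        rw [hPolm]
        rw [Real.log_div (div_pos (mul_pos (hpibar_pos s₀ b) (Real.exp_pos _)) hZpos).ne'
            (hpibar_pos s₀ b).ne',
          Real.log_div (mul_pos (hpibar_pos s₀ b) (Real.exp_pos _)).ne' hZpos.ne',
          Real.log_mul (hpibar_pos s₀ b).ne' (Real.exp_pos _).ne', Real.log_exp]
        ring
      rw [hQm θ' b s₀, hlog]
      conv_lhs => rw [hPolm]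
      conv_rhs => rw [hPolm]
      have hZne : (∑ b', pibar s₀ b' * Real.exp (⟪θ', ψ b' s₀⟫ / τ)) ≠ 0 := hZpos.ne'
      field_simp
      ring
    rw [Finset.sum_congr rfl fun b _ => hterm b, Finset.sum_add_distrib, ← Finset.mul_sum,
      hPol_sum θ' m s₀, mul_one]
    ring
  -- Step B: reduction of the objective
  have hJred : ∃ C : ℝ, ∀ (θ' : EuclideanSpace ℝ (Fin P)),
      ∑ s', V θ' n s' = C + ∑ s', ρ θ (n - m) s' * V θ' m s' := by
    have key : ∀ d, m + d ≤ n → ∃ C : ℝ, ∀ (θ' : EuclideanSpace ℝ (Fin P)),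
        ∑ s₀, ρ θ (n - (m + d)) s₀ * V θ' (m + d) s₀
          = C + ∑ s', ρ θ (n - m) s' * V θ' m s' := by
      intro d
      induction d with
      | zero => exact fun _ => ⟨0, fun θ' => by simp⟩
      | succ d ih =>
        intro hdn
        obtain ⟨C, hC⟩ := ih (by omega)
        have hne : m + d + 1 ≠ m := by omega
        refine ⟨∑ s₀, ρ θ (n - (m + d + 1)) s₀ * ∑ b, Pol θ (m + d + 1) s₀ b *
          (r b s₀ - τ * Real.log (Pol θ (m + d + 1) s₀ b / pibar s₀ b)) + C, fun θ' => ?_⟩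
        have hidx : m + (d + 1) = m + d + 1 := by omega
        have h1 : ∀ s₀, V θ' (m + d + 1) s₀
            = (∑ b, Pol θ (m + d + 1) s₀ b *
                (r b s₀ - τ * Real.log (Pol θ (m + d + 1) s₀ b / pibar s₀ b)))
              + ∑ b, Pol θ (m + d + 1) s₀ b * ∑ s'', p s₀ b s'' * V θ' (m + d) s'' := by
          intro s₀
          rw [hV, hPolfix θ' θ _ hne, ← Finset.sum_add_distrib]
          refine Finset.sum_congr rfl fun b _ => ?_
          rw [hQ]
          ring
        calc ∑ s₀, ρ θ (n - (m + (d + 1))) s₀ * V θ' (m + (d + 1)) s₀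
            = (∑ s₀, ρ θ (n - (m + d + 1)) s₀ * ∑ b, Pol θ (m + d + 1) s₀ b *
                (r b s₀ - τ * Real.log (Pol θ (m + d + 1) s₀ b / pibar s₀ b)))
              + ∑ s₀, ρ θ (n - (m + d + 1)) s₀ * ∑ b, Pol θ (m + d + 1) s₀ b *
                ∑ s'', p s₀ b s'' * V θ' (m + d) s'' := by
              simp only [hidx]
              rw [← Finset.sum_add_distrib]
              refine Finset.sum_congr rfl fun s₀ _ => ?_
              rw [h1 s₀]
              ring
          _ = (∑ s₀, ρ θ (n - (m + d + 1)) s₀ * ∑ b, Pol θ (m + d + 1) s₀ b *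
                (r b s₀ - τ * Real.log (Pol θ (m + d + 1) s₀ b / pibar s₀ b)))
              + ∑ s'', ρ θ (n - (m + d)) s'' * V θ' (m + d) s'' := by
              congr 1
              have hswap : ∑ s₀, ρ θ (n - (m + d + 1)) s₀ * ∑ b, Pol θ (m + d + 1) s₀ b *
                  ∑ s'', p s₀ b s'' * V θ' (m + d) s''
                  = ∑ s'', (∑ s₀, ρ θ (n - (m + d + 1)) s₀ *
                      ∑ b, Pol θ (m + d + 1) s₀ b * p s₀ b s'') * V θ' (m + d) s'' := by
                calc ∑ s₀, ρ θ (n - (m + d + 1)) s₀ * ∑ b, Pol θ (m + d + 1) s₀ b *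
                      ∑ s'', p s₀ b s'' * V θ' (m + d) s''
                    = ∑ s₀, ∑ b, ∑ s'', ρ θ (n - (m + d + 1)) s₀ *
                        (Pol θ (m + d + 1) s₀ b * (p s₀ b s'' * V θ' (m + d) s'')) := by
                      refine Finset.sum_congr rfl fun s₀ _ => ?_
                      rw [Finset.mul_sum]
                      refine Finset.sum_congr rfl fun b _ => ?_
                      rw [Finset.mul_sum, Finset.mul_sum]
                  _ = ∑ s₀, ∑ s'', ∑ b, ρ θ (n - (m + d + 1)) s₀ *
                        (Pol θ (m + d + 1) s₀ b * (p s₀ b s'' * V θ' (m + d) s'')) :=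
                      Finset.sum_congr rfl fun s₀ _ => Finset.sum_comm
                  _ = ∑ s'', ∑ s₀, ∑ b, ρ θ (n - (m + d + 1)) s₀ *
                        (Pol θ (m + d + 1) s₀ b * (p s₀ b s'' * V θ' (m + d) s'')) :=
                      Finset.sum_comm
                  _ = ∑ s'', (∑ s₀, ρ θ (n - (m + d + 1)) s₀ *
                        ∑ b, Pol θ (m + d + 1) s₀ b * p s₀ b s'') * V θ' (m + d) s'' := by
                      refine Finset.sum_congr rfl fun s'' _ => ?_
                      conv_rhs => rw [Finset.sum_mul]
                      refine Finset.sum_congr rfl fun s₀ _ => ?_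
                      conv_rhs => rw [Finset.mul_sum, Finset.sum_mul]
                      exact Finset.sum_congr rfl fun b _ => by ring
              rw [hswap]
              refine Finset.sum_congr rfl fun s'' _ => ?_
              have hk1 : n - (m + d) = (n - (m + d + 1)) + 1 := by omega
              have hk2 : n - (n - (m + d + 1)) = m + d + 1 := by omega
              rw [hk1, hρ θ (n - (m + d + 1)) s'', hk2]
          _ = _ := by rw [hC θ']; ring
    obtain ⟨C, hC⟩ := key (n - m) (by omega)
    have hnm : m + (n - m) = n := by omega
    refine ⟨C, fun θ' => ?_⟩
    have := hC θ'
    rw [hnm, Nat.sub_self] at this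
    rw [← this]
    exact Finset.sum_congr rfl fun s₀ _ => by rw [hρ0, one_mul]
  -- gradient of the log-policy
  have hG2 : HasGradientAt (fun θ' : EuclideanSpace ℝ (Fin P) => Real.log (Pol θ' m s a))
      (τ⁻¹ • (ψ a s - ∑ b, Pol θ m s b • ψ b s)) θ := by
    have h := aux_logpol_grad (pibar s) (hpibar_pos s) τ hτ (fun b => ψ b s) a θ
    simp only [← hPolm] at h
    exact h
  -- gradient of V at level m
  have hGV : ∀ s', HasGradientAt (fun θ' : EuclideanSpace ℝ (Fin P) => V θ' m s')
      (τ⁻¹ • ∑ b, (Pol θ m s' b * ((Qstar m b s' - ⟪θ, ψ b s'⟫) -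
        ∑ a', Pol θ m s' a' * (Qstar m a' s' - ⟪θ, ψ a' s'⟫))) • ψ b s') θ := by
    intro s'
    have h := aux_V_grad (pibar s') (hpibar_pos s') τ hτ (fun b => ψ b s')
      (fun b => Qstar m b s') θ
    simp only [← hPolm] at h
    have hfun : (fun θ' : EuclideanSpace ℝ (Fin P) => V θ' m s')
        = (fun y : EuclideanSpace ℝ (Fin P) =>
            τ * Real.log (∑ b, pibar s' b * Real.exp (⟪y, ψ b s'⟫ / τ))
              + ∑ b, Pol y m s' b * (Qstar m b s' - ⟪y, ψ b s'⟫)) := by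
      funext y
      rw [hVm y s']
      congr 1
      exact Finset.sum_congr rfl fun b _ => by rw [hPolm]
    rw [hfun]
    exact h
  -- gradient of the objective
  obtain ⟨C, hC⟩ := hJred
  have hfunJ : (fun θ' : EuclideanSpace ℝ (Fin P) => ∑ s', V θ' n s')
      = (fun θ' => C + ∑ s', ρ θ (n - m) s' * V θ' m s') := funext fun θ' => hC θ'
  have hJgrad : HasGradientAt (fun θ' : EuclideanSpace ℝ (Fin P) => ∑ s', V θ' n s')
      (∑ s', ρ θ (n - m) s' • (τ⁻¹ • ∑ b, (Pol θ m s' b * ((Qstar m b s' - ⟪θ, ψ b s'⟫) -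
        ∑ a', Pol θ m s' a' * (Qstar m a' s' - ⟪θ, ψ a' s'⟫))) • ψ b s')) θ := by
    rw [hfunJ]
    exact aux_grad_combine Finset.univ C (ρ θ (n - m)) (fun s' θ' => V θ' m s') _ θ
      (fun s' _ => hGV s')
  rw [hJgrad.gradient, hG2.gradient]
  -- positivity facts
  have hZpos : ∀ s', (0:ℝ) < ∑ b, pibar s' b * Real.exp (⟪θ, ψ b s'⟫ / τ) := fun s' =>
    Finset.sum_pos (fun b _ => mul_pos (hpibar_pos s' b) (Real.exp_pos _)) Finset.univ_nonempty
  have hZspos : ∀ s', (0:ℝ) < ∑ b, pibar s' b * Real.exp (Qstar m b s' / τ) := fun s' =>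
    Finset.sum_pos (fun b _ => mul_pos (hpibar_pos s' b) (Real.exp_pos _)) Finset.univ_nonempty
  -- the log-ratio identity
  have hL : ∀ s' b, Real.log (Pol θ m s' b / pistar m s' b)
      = (⟪θ, ψ b s'⟫ - Qstar m b s') / τ
        + (Real.log (∑ b', pibar s' b' * Real.exp (Qstar m b' s' / τ))
          - Real.log (∑ b', pibar s' b' * Real.exp (⟪θ, ψ b' s'⟫ / τ))) := by
    intro s' b
    have hps : pistar m s' b = pibar s' b * Real.exp (Qstar m b s' / τ) /
        ∑ b', pibar s' b' * Real.exp (Qstar m b' s' / τ) := by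
      conv_lhs => rw [← hm1, hpistar]
      simp only [hm1]
    rw [hPolm, hps,
      Real.log_div
        (div_pos (mul_pos (hpibar_pos s' b) (Real.exp_pos _)) (hZpos s')).ne'
        (div_pos (mul_pos (hpibar_pos s' b) (Real.exp_pos _)) (hZspos s')).ne',
      Real.log_div (mul_pos (hpibar_pos s' b) (Real.exp_pos _)).ne' (hZpos s').ne',
      Real.log_div (mul_pos (hpibar_pos s' b) (Real.exp_pos _)).ne' (hZspos s').ne',
      Real.log_mul (hpibar_pos s' b).ne' (Real.exp_pos _).ne',
      Real.log_mul (hpibar_pos s' b).ne' (Real.exp_pos _).ne',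
      Real.log_exp, Real.log_exp]
    ring
  -- the KL identity
  have hKL : ∀ s', ∑ b, Pol θ m s' b * Real.log (Pol θ m s' b / pistar m s' b)
      = -(∑ a', Pol θ m s' a' * (Qstar m a' s' - ⟪θ, ψ a' s'⟫)) / τ
        + (Real.log (∑ b', pibar s' b' * Real.exp (Qstar m b' s' / τ))
          - Real.log (∑ b', pibar s' b' * Real.exp (⟪θ, ψ b' s'⟫ / τ))) := by
    intro s'
    have h1 : ∑ b, Pol θ m s' b * Real.log (Pol θ m s' b / pistar m s' b)
        = ∑ b, (Pol θ m s' b * (Qstar m b s' - ⟪θ, ψ b s'⟫) * (-τ⁻¹)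
          + (Real.log (∑ b', pibar s' b' * Real.exp (Qstar m b' s' / τ))
            - Real.log (∑ b', pibar s' b' * Real.exp (⟪θ, ψ b' s'⟫ / τ))) * Pol θ m s' b) :=
      Finset.sum_congr rfl fun b _ => by rw [hL s' b]; field_simp; ring
    rw [h1, Finset.sum_add_distrib, ← Finset.sum_mul, ← Finset.mul_sum, hPol_sum θ m s',
      mul_one]
    field_simp
  have hcoeff : ∀ s' b, Real.log (Pol θ m s' b / pistar m s' b)
      - ∑ b', Pol θ m s' b' * Real.log (Pol θ m s' b' / pistar m s' b')
      = (⟪θ, ψ b s'⟫ - Qstar m b s'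
          + ∑ a', Pol θ m s' a' * (Qstar m a' s' - ⟪θ, ψ a' s'⟫)) / τ := by
    intro s' b
    rw [hL s' b, hKL s']
    ring
  have hTheta : ∀ (a' : A) (s' : S), Θk (a, s) (a', s') - ∑ a'', Pol θ m s a'' * Θk (a'', s) (a', s')
      = ⟪ψ a' s', ψ a s - ∑ b, Pol θ m s b • ψ b s⟫ := by
    intro a' s'
    simp only [hΘk, inner_sub_right, inner_sum, real_inner_smul_right]
    congr 1
    · exact real_inner_comm _ _
    · exact Finset.sum_congr rfl fun b _ => by rw [real_inner_comm]
  -- final algebra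
  simp only [hTheta, hcoeff]
  rw [sum_inner]
  conv_rhs => rw [Finset.mul_sum]
  refine Finset.sum_congr rfl fun s' _ => ?_
  simp only [real_inner_smul_left, sum_inner, real_inner_smul_right, Finset.mul_sum]
  refine Finset.sum_congr rfl fun b _ => ?_
  field_simp
  ring
end

section
/- Global optimality of MPG (finite state space, critical-point form): let π_θ be an extended policy with softmax-linear components and disjoint parameters, let 1 ≤ m ≤ n, suppose π^{(k)}_{θ^{(k)}} = π*^{(k)} for all 1 ≤ k ≤ m−1 and ∇_{θ^{(m)}} J_n(π_θ) = 0 (in particular this holds at any limit of ideal MPG updates). Define d : A × S → ℝ by d(a,s) := ρ^{(n−m)}(s) π^{(m)}(a|s) ( log(π^{(m)}(a|s)/π*^{(m)}(a|s)) − D_KL(π^{(m)}‖π*^{(m)})(s) ). Then for every eigenvalue–eigenvector pair (λ, e) of the symmetric positive-semidefinite matrix (Θ^{(m)}((a,s),(a',s')))_{(a,s),(a',s')∈A×S} with λ > 0, ⟨d, e⟩ = 0. In particular, if that matrix is positive definite and ρ^{(n−m)}(s) > 0 for every s (which holds e.g. when m = n, or when p(s,a,s') > 0 for all s,a,s'),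 then π^{(m)} = π*^{(m)}. -/
open scoped RealInnerProductSpace
open Matrix

noncomputable section MPGAux
open Finset
variable {P : ℕ} {A : Type*} [Fintype A] [Nonempty A]

private lemma inner_hasFDerivAt (c x : EuclideanSpace ℝ (Fin P)) :
    HasFDerivAt (fun θ' : EuclideanSpace ℝ (Fin P) => ⟪θ', c⟫) (innerSL ℝ c) x := by
  have h : (fun θ' : EuclideanSpace ℝ (Fin P) => ⟪θ', c⟫) = ⇑(innerSL ℝ c) := by
    funext θ'; exact real_inner_comm _ _
  rw [h]; exact (innerSL ℝ c).hasFDerivAt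

private lemma w_hasFDerivAt (τ : ℝ) (hτ : τ ≠ 0) (b : ℝ) (c x : EuclideanSpace ℝ (Fin P)) :
    HasFDerivAt (fun θ' : EuclideanSpace ℝ (Fin P) => b * Real.exp (⟪θ', c⟫ / τ))
      ((b * Real.exp (⟪x, c⟫ / τ) / τ) • innerSL ℝ c) x := by
  have h2 : HasFDerivAt (fun θ' : EuclideanSpace ℝ (Fin P) => ⟪θ', c⟫ / τ)
      (τ⁻¹ • innerSL ℝ c) x := by
    simpa [div_eq_mul_inv] using (inner_hasFDerivAt c x).mul_const τ⁻¹
  have h4 := (h2.exp).const_mul b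
  refine h4.congr_fderiv ?_
  rw [smul_smul, smul_smul]
  ring_nf

private lemma scalar_key {A : Type*} [Fintype A] (τ Z : ℝ) (hτ : τ ≠ 0) (hZ : Z ≠ 0)
    (w c ι : A → ℝ) :
    ∑ x, τ⁻¹ * (w x / Z) * (c x - ∑ b, w b / Z * c b) * ι x =
      τ * (Z⁻¹ * ∑ x, w x / τ * ι x) +
        ((∑ a, w a * c a) * (-(Z ^ 2)⁻¹ * ∑ x, w x / τ * ι x) +
          Z⁻¹ * ∑ x, (-(w x * ι x) + c x * (w x / τ * ι x))) := by
  have h1 : ∑ x, w x / τ * ι x = (∑ x, w x * ι x) / τ := by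
    rw [Finset.sum_div]; exact Finset.sum_congr rfl fun x _ => by ring
  have h2 : ∑ x, (-(w x * ι x) + c x * (w x / τ * ι x)) =
      (∑ x, w x * c x * ι x) / τ - ∑ x, w x * ι x := by
    rw [show (fun x => -(w x * ι x) + c x * (w x / τ * ι x)) =
        (fun x => w x * c x * ι x / τ - w x * ι x) from funext fun x => by field_simp; ring,
      Finset.sum_sub_distrib, Finset.sum_div]
  have h3 : ∑ b, w b / Z * c b = (∑ b, w b * c b) / Z := by
    rw [Finset.sum_div]; exact Finset.sum_congr rfl fun b _ => by ring
  simp only [h1, h2, h3]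
  have h5 : ∀ x ∈ Finset.univ (α := A),
      τ⁻¹ * (w x / Z) * (c x - (∑ b, w b * c b) / Z) * ι x =
        (τ⁻¹ / Z) * (w x * c x * ι x) - (τ⁻¹ * (∑ b, w b * c b) / Z ^ 2) * (w x * ι x) :=
    fun x _ => by field_simp
  rw [Finset.sum_congr rfl h5, Finset.sum_sub_distrib, ← Finset.mul_sum, ← Finset.mul_sum]
  field_simp
  ring

private lemma sum_rewrite (τ : ℝ) (hτ : 0 < τ) (pibar : A → ℝ) (hpibar : ∀ a, 0 < pibar a)
    (q : A → ℝ) (ψ : A → EuclideanSpace ℝ (Fin P)) (θ' : EuclideanSpace ℝ (Fin P)) :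
    ∑ a, (pibar a * Real.exp (⟪θ', ψ a⟫ / τ) / ∑ a', pibar a' * Real.exp (⟪θ', ψ a'⟫ / τ)) *
        (q a - τ * Real.log ((pibar a * Real.exp (⟪θ', ψ a⟫ / τ) /
          ∑ a', pibar a' * Real.exp (⟪θ', ψ a'⟫ / τ)) / pibar a)) =
      τ * Real.log (∑ a, pibar a * Real.exp (⟪θ', ψ a⟫ / τ)) +
        (∑ a, pibar a * Real.exp (⟪θ', ψ a⟫ / τ) * (q a - ⟪θ', ψ a⟫)) /
          ∑ a, pibar a * Real.exp (⟪θ', ψ a⟫ / τ) := by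
  set Z : ℝ := ∑ a, pibar a * Real.exp (⟪θ', ψ a⟫ / τ) with hZ
  have hZpos : 0 < Z := Finset.sum_pos (fun a _ => mul_pos (hpibar a) (Real.exp_pos _)) Finset.univ_nonempty
  have hZne : Z ≠ 0 := ne_of_gt hZpos
  have key : ∀ a : A, (pibar a * Real.exp (⟪θ', ψ a⟫ / τ) / Z) *
      (q a - τ * Real.log ((pibar a * Real.exp (⟪θ', ψ a⟫ / τ) / Z) / pibar a)) =
      (pibar a * Real.exp (⟪θ', ψ a⟫ / τ) * (q a - ⟪θ', ψ a⟫)) / Z +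
        (τ * Real.log Z / Z) * (pibar a * Real.exp (⟪θ', ψ a⟫ / τ)) := by
    intro a
    have hpa := hpibar a
    have h1 : pibar a * Real.exp (⟪θ', ψ a⟫ / τ) / Z / pibar a = Real.exp (⟪θ', ψ a⟫ / τ) / Z := by
      field_simp
    rw [h1, Real.log_div (Real.exp_ne_zero _) hZne, Real.log_exp]
    field_simp
    ring
  calc ∑ a, (pibar a * Real.exp (⟪θ', ψ a⟫ / τ) / Z) *
      (q a - τ * Real.log ((pibar a * Real.exp (⟪θ', ψ a⟫ / τ) / Z) / pibar a))
      = ∑ a, ((pibar a * Real.exp (⟪θ', ψ a⟫ / τ) * (q a - ⟪θ', ψ a⟫)) / Z +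
          (τ * Real.log Z / Z) * (pibar a * Real.exp (⟪θ', ψ a⟫ / τ))) :=
        Finset.sum_congr rfl (fun a _ => key a)
    _ = (∑ a, pibar a * Real.exp (⟪θ', ψ a⟫ / τ) * (q a - ⟪θ', ψ a⟫)) / Z +
          (τ * Real.log Z / Z) * Z := by
        rw [Finset.sum_add_distrib, ← Finset.sum_div, ← Finset.mul_sum]
    _ = τ * Real.log Z + (∑ a, pibar a * Real.exp (⟪θ', ψ a⟫ / τ) * (q a - ⟪θ', ψ a⟫)) / Z := by
        rw [div_mul_cancel₀ _ hZne, add_comm]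

private lemma core1 (τ : ℝ) (hτ : 0 < τ) (pibar : A → ℝ) (hpibar : ∀ a, 0 < pibar a)
    (q : A → ℝ) (ψ : A → EuclideanSpace ℝ (Fin P)) (θ : EuclideanSpace ℝ (Fin P))
    (hsum_rewrite : ∀ θ' : EuclideanSpace ℝ (Fin P),
      ∑ a, (pibar a * Real.exp (⟪θ', ψ a⟫ / τ) / ∑ a', pibar a' * Real.exp (⟪θ', ψ a'⟫ / τ)) *
        (q a - τ * Real.log ((pibar a * Real.exp (⟪θ', ψ a⟫ / τ) /
          ∑ a', pibar a' * Real.exp (⟪θ', ψ a'⟫ / τ)) / pibar a)) =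
      τ * Real.log (∑ a, pibar a * Real.exp (⟪θ', ψ a⟫ / τ)) +
        (∑ a, pibar a * Real.exp (⟪θ', ψ a⟫ / τ) * (q a - ⟪θ', ψ a⟫)) /
          ∑ a, pibar a * Real.exp (⟪θ', ψ a⟫ / τ)) :
    HasFDerivAt (fun θ' : EuclideanSpace ℝ (Fin P) =>
        ∑ a, (pibar a * Real.exp (⟪θ', ψ a⟫ / τ) / ∑ a', pibar a' * Real.exp (⟪θ', ψ a'⟫ / τ)) *
          (q a - τ * Real.log ((pibar a * Real.exp (⟪θ', ψ a⟫ / τ) /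
            ∑ a', pibar a' * Real.exp (⟪θ', ψ a'⟫ / τ)) / pibar a)))
      (∑ a, (τ⁻¹ * (pibar a * Real.exp (⟪θ, ψ a⟫ / τ) /
            ∑ a', pibar a' * Real.exp (⟪θ, ψ a'⟫ / τ)) *
          ((q a - ⟪θ, ψ a⟫) - ∑ b, (pibar b * Real.exp (⟪θ, ψ b⟫ / τ) /
            ∑ a', pibar a' * Real.exp (⟪θ, ψ a'⟫ / τ)) * (q b - ⟪θ, ψ b⟫)))
         • innerSL ℝ (ψ a)) θ := by
  have hτ' : τ ≠ 0 := ne_of_gt hτ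
  have hwpos : ∀ (x : EuclideanSpace ℝ (Fin P)) (a : A),
      0 < pibar a * Real.exp (⟪x, ψ a⟫ / τ) := fun x a => mul_pos (hpibar a) (Real.exp_pos _)
  have hZpos : ∀ x : EuclideanSpace ℝ (Fin P),
      0 < ∑ a, pibar a * Real.exp (⟪x, ψ a⟫ / τ) :=
    fun x => Finset.sum_pos (fun a _ => hwpos x a) Finset.univ_nonempty
  have hZne : (∑ a, pibar a * Real.exp (⟪θ, ψ a⟫ / τ)) ≠ 0 := ne_of_gt (hZpos θ)
  -- rewrite the function
  have hfun : (fun θ' : EuclideanSpace ℝ (Fin P) =>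
        ∑ a, (pibar a * Real.exp (⟪θ', ψ a⟫ / τ) / ∑ a', pibar a' * Real.exp (⟪θ', ψ a'⟫ / τ)) *
          (q a - τ * Real.log ((pibar a * Real.exp (⟪θ', ψ a⟫ / τ) /
            ∑ a', pibar a' * Real.exp (⟪θ', ψ a'⟫ / τ)) / pibar a)))
      = (fun θ' : EuclideanSpace ℝ (Fin P) =>
        τ * Real.log (∑ a, pibar a * Real.exp (⟪θ', ψ a⟫ / τ)) +
        (∑ a, pibar a * Real.exp (⟪θ', ψ a⟫ / τ) * (q a - ⟪θ', ψ a⟫)) *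
          (∑ a, pibar a * Real.exp (⟪θ', ψ a⟫ / τ))⁻¹) := by
    funext θ'
    rw [hsum_rewrite θ', div_eq_mul_inv]
  rw [hfun]
  -- derivative of Z
  have hZ : HasFDerivAt (fun θ' : EuclideanSpace ℝ (Fin P) =>
        ∑ a, pibar a * Real.exp (⟪θ', ψ a⟫ / τ))
      (∑ a, (pibar a * Real.exp (⟪θ, ψ a⟫ / τ) / τ) • innerSL ℝ (ψ a)) θ :=
    HasFDerivAt.fun_sum (fun a _ => w_hasFDerivAt τ hτ' (pibar a) (ψ a) θ)
  -- derivative of N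
  have hca : ∀ a : A, HasFDerivAt (fun θ' : EuclideanSpace ℝ (Fin P) => q a - ⟪θ', ψ a⟫)
      (-(innerSL ℝ (ψ a))) θ := by
    intro a
    simpa using (hasFDerivAt_const (q a) θ).fun_sub (inner_hasFDerivAt (ψ a) θ)
  have hN : HasFDerivAt (fun θ' : EuclideanSpace ℝ (Fin P) =>
        ∑ a, pibar a * Real.exp (⟪θ', ψ a⟫ / τ) * (q a - ⟪θ', ψ a⟫))
      (∑ a, ((pibar a * Real.exp (⟪θ, ψ a⟫ / τ)) • (-(innerSL ℝ (ψ a)))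
          + (q a - ⟪θ, ψ a⟫) • ((pibar a * Real.exp (⟪θ, ψ a⟫ / τ) / τ) • innerSL ℝ (ψ a)))) θ :=
    HasFDerivAt.fun_sum (fun a _ => (w_hasFDerivAt τ hτ' (pibar a) (ψ a) θ).fun_mul (hca a))
  have hlog := (hZ.log hZne).const_mul τ
  have hinv := (hasDerivAt_inv hZne).comp_hasFDerivAt θ hZ
  have hfinal := hlog.add (hN.mul hinv)
  refine hfinal.congr_fderiv ?_
  symm
  ext v
  simp only [ContinuousLinearMap.coe_sum', Finset.sum_apply, ContinuousLinearMap.coe_smul',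
    Pi.smul_apply, ContinuousLinearMap.add_apply, ContinuousLinearMap.coe_add',
    ContinuousLinearMap.neg_apply, smul_eq_mul, Pi.add_apply, Pi.neg_apply, mul_neg]
  exact scalar_key τ (∑ a', pibar a' * Real.exp (⟪θ, ψ a'⟫ / τ)) hτ' hZne
    (fun x => pibar x * Real.exp (⟪θ, ψ x⟫ / τ))
    (fun x => q x - ⟪θ, ψ x⟫)
    (fun x => (innerSL ℝ) (ψ x) v)

end MPGAux


set_option maxHeartbeats 1000000

/-- Global optimality of MPG (finite state space, critical-point
form): if the components `π^{(1)},…,π^{(m−1)}` are optimal and `θ^{(m)}` is a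
critical point of `J_n`, then
`d(a,s) = ρ^{(n−m)}(s) π^{(m)}(a|s) (log(π^{(m)}(a|s)/π*^{(m)}(a|s)) −
D_KL(π^{(m)}‖π*^{(m)})(s))` is orthogonal to every eigenvector of the kernel
matrix `(Θ^{(m)}((a,s),(a',s')))` with positive eigenvalue; in particular, if
that matrix is positive definite and `ρ^{(n−m)} > 0` everywhere, then
`π^{(m)} = π*^{(m)}`. -/
theorem mpg_global_optimality
    {S A : Type*} [Fintype S] [Fintype A] [Nonempty S] [Nonempty A]
    (τ : ℝ) (hτ : 0 < τ)
    (pibar : S → A → ℝ) (hpibar_pos : ∀ s a, 0 < pibar s a)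
    (hpibar_sum : ∀ s, ∑ a, pibar s a = 1)
    (r : A → S → ℝ)
    (p : S → A → S → ℝ) (hp_nonneg : ∀ s a s', 0 ≤ p s a s')
    (hp_sum : ∀ s a, ∑ s', p s a s' = 1)
    (n : ℕ) (m : ℕ) (hm : 1 ≤ m) (hmn : m ≤ n)
    (P : ℕ) (ψ : A → S → EuclideanSpace ℝ (Fin P))
    -- the extended policy, as a function of the parameter `θ^{(m)}` of its
    -- `m`-step component; the other components do not depend on `θ^{(m)}`
    (Pol : EuclideanSpace ℝ (Fin P) → ℕ → S → A → ℝ)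
    (hPolm : ∀ θ s a, Pol θ m s a =
      pibar s a * Real.exp (⟪θ, ψ a s⟫ / τ) /
        ∑ a', pibar s a' * Real.exp (⟪θ, ψ a' s⟫ / τ))
    (hPolfix : ∀ θ θ' j, j ≠ m → Pol θ j = Pol θ' j)
    (hPol_pos : ∀ θ j s a, 0 < Pol θ j s a) (hPol_sum : ∀ θ j s, ∑ a, Pol θ j s a = 1)
    -- value and Q functions of the extended policy, defined recursively
    (V : EuclideanSpace ℝ (Fin P) → ℕ → S → ℝ)
    (Q : EuclideanSpace ℝ (Fin P) → ℕ → A → S → ℝ)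
    (hV0 : ∀ θ s, V θ 0 s = 0)
    (hQ : ∀ θ j a s, Q θ (j + 1) a s = r a s + ∑ s', p s a s' * V θ j s')
    (hV : ∀ θ j s, V θ (j + 1) s = ∑ a, Pol θ (j + 1) s a *
      (Q θ (j + 1) a s - τ * Real.log (Pol θ (j + 1) s a / pibar s a)))
    -- occupancy weights (uniform unnormalized initial distribution)
    (ρ : EuclideanSpace ℝ (Fin P) → ℕ → S → ℝ)
    (hρ0 : ∀ θ s, ρ θ 0 s = 1)
    (hρ : ∀ θ k s', ρ θ (k + 1) s' =
      ∑ s, ρ θ k s * ∑ a, Pol θ (n - k) s a * p s a s')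
    -- optimal extended policy and its value and Q functions, defined recursively
    (Vstar : ℕ → S → ℝ) (Qstar : ℕ → A → S → ℝ) (pistar : ℕ → S → A → ℝ)
    (hVstar0 : ∀ s, Vstar 0 s = 0)
    (hQstar : ∀ j a s, Qstar (j + 1) a s = r a s + ∑ s', p s a s' * Vstar j s')
    (hpistar : ∀ j s a, pistar (j + 1) s a =
      pibar s a * Real.exp (Qstar (j + 1) a s / τ) /
        ∑ a', pibar s a' * Real.exp (Qstar (j + 1) a' s / τ))
    (hVstar : ∀ j s, Vstar (j + 1) s = ∑ a, pistar (j + 1) s a *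
      (Qstar (j + 1) a s - τ * Real.log (pistar (j + 1) s a / pibar s a)))
    -- the kernel matrix of the `m`-step feature map
    (M : Matrix (A × S) (A × S) ℝ)
    (hM : ∀ x y : A × S, M x y = ⟪ψ x.1 x.2, ψ y.1 y.2⟫)
    (θ : EuclideanSpace ℝ (Fin P))
    -- the lower-step policies are optimal
    (hlow : ∀ k, 1 ≤ k → k ≤ m - 1 → Pol θ k = pistar k)
    -- `θ^{(m)}` is a critical point of `J_n`
    (hcrit : gradient (fun θ' => ∑ s, V θ' n s) θ = 0)
    (d : A × S → ℝ)
    (hd : ∀ a s, d (a, s) = ρ θ (n - m) s * Pol θ m s a *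
      (Real.log (Pol θ m s a / pistar m s a)
        - ∑ b, Pol θ m s b * Real.log (Pol θ m s b / pistar m s b))) :
    (∀ (lam : ℝ) (e : A × S → ℝ), e ≠ 0 → M.mulVec e = lam • e → 0 < lam →
        ∑ x, d x * e x = 0) ∧
      (M.PosDef → (∀ s, 0 < ρ θ (n - m) s) →
        ∀ s a, Pol θ m s a = pistar m s a) := by
  classical
  have hτ' : τ ≠ 0 := ne_of_gt hτ
  obtain ⟨m', rfl⟩ : ∃ m', m = m' + 1 := ⟨m - 1, (Nat.succ_pred_eq_of_pos hm).symm⟩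
  -- Step B : lower value functions are optimal
  have hVlow : ∀ j, j ≤ m' → ∀ θ'' s, V θ'' j s = Vstar j s := by
    intro j
    induction j with
    | zero => intro _ θ'' s; rw [hV0, hVstar0]
    | succ j ih =>
      intro hj θ'' s
      have hPe : Pol θ'' (j + 1) = pistar (j + 1) := by
        rw [hPolfix θ'' θ (j + 1) (by omega)]
        exact hlow (j + 1) (by omega) (by omega)
      rw [hV, hVstar]
      refine Finset.sum_congr rfl fun a _ => ?_
      have hQe : Q θ'' (j + 1) a s = Qstar (j + 1) a s := by
        rw [hQ, hQstar]
        congr 1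
        exact Finset.sum_congr rfl fun s' _ => by rw [ih (by omega) θ'' s']
      rw [hPe, hQe]
  have hQm : ∀ θ'' a s, Q θ'' (m' + 1) a s = Qstar (m' + 1) a s := by
    intro θ'' a s; rw [hQ, hQstar]; congr 1
    exact Finset.sum_congr rfl fun s' _ => by rw [hVlow m' le_rfl]
  -- Step A : telescoping the objective
  have hA : ∀ k, k ≤ n - (m' + 1) → ∃ C : ℝ, ∀ θ'',
      ∑ s, V θ'' n s = C + ∑ s, ρ θ k s * V θ'' (n - k) s := by
    intro k
    induction k with
    | zero => exact fun _ => ⟨0, fun θ'' => by simp [hρ0]⟩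
    | succ k ih =>
      intro hk
      obtain ⟨C, hC⟩ := ih (by omega)
      have hnk : n - k = (n - (k + 1)) + 1 := by omega
      set j := n - (k + 1) with hjdef
      refine ⟨C + ∑ s, ρ θ k s * ∑ a, Pol θ (j + 1) s a *
        (r a s - τ * Real.log (Pol θ (j + 1) s a / pibar s a)), fun θ'' => ?_⟩
      rw [hC θ'']
      have hPe : Pol θ'' (j + 1) = Pol θ (j + 1) := hPolfix θ'' θ (j + 1) (by omega)
      have hexpand : ∀ s, V θ'' (n - k) s =
          (∑ a, Pol θ (j + 1) s a * (r a s - τ * Real.log (Pol θ (j + 1) s a / pibar s a)))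
          + ∑ a, Pol θ (j + 1) s a * ∑ s', p s a s' * V θ'' j s' := by
        intro s
        rw [hnk, hV, hPe, ← Finset.sum_add_distrib]
        refine Finset.sum_congr rfl fun a _ => ?_
        rw [hQ]
        ring
      have hswap : ∑ s, ρ θ k s * ∑ a, Pol θ (j + 1) s a * ∑ s', p s a s' * V θ'' j s'
          = ∑ s', ρ θ (k + 1) s' * V θ'' j s' := by
        have hρ' : ∀ s', ρ θ (k + 1) s' = ∑ s, ρ θ k s * ∑ a, Pol θ (j + 1) s a * p s a s' := by
          intro s'
          rw [hρ θ k s', hnk]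
        have h1 : ∀ s', ρ θ (k + 1) s' * V θ'' j s'
            = ∑ s, ∑ a, ρ θ k s * (Pol θ (j + 1) s a * (p s a s' * V θ'' j s')) := by
          intro s'
          rw [hρ' s', Finset.sum_mul]
          refine Finset.sum_congr rfl fun s _ => ?_
          rw [Finset.mul_sum, Finset.sum_mul]
          exact Finset.sum_congr rfl fun a _ => by ring
        calc ∑ s, ρ θ k s * ∑ a, Pol θ (j + 1) s a * ∑ s', p s a s' * V θ'' j s'
            = ∑ s, ∑ a, ∑ s', ρ θ k s * (Pol θ (j + 1) s a * (p s a s' * V θ'' j s')) := by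
              simp only [Finset.mul_sum]
          _ = ∑ s, ∑ s', ∑ a, ρ θ k s * (Pol θ (j + 1) s a * (p s a s' * V θ'' j s')) :=
              Finset.sum_congr rfl fun s _ => Finset.sum_comm
          _ = ∑ s', ∑ s, ∑ a, ρ θ k s * (Pol θ (j + 1) s a * (p s a s' * V θ'' j s')) :=
              Finset.sum_comm
          _ = ∑ s', ρ θ (k + 1) s' * V θ'' j s' :=
              Finset.sum_congr rfl fun s' _ => (h1 s').symm
      calc C + ∑ s, ρ θ k s * V θ'' (n - k) s
          = C + ((∑ s, ρ θ k s * ∑ a, Pol θ (j + 1) s a *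
              (r a s - τ * Real.log (Pol θ (j + 1) s a / pibar s a)))
            + ∑ s, ρ θ k s * ∑ a, Pol θ (j + 1) s a * ∑ s', p s a s' * V θ'' j s') := by
            rw [← Finset.sum_add_distrib]
            congr 1
            exact Finset.sum_congr rfl fun s _ => by rw [hexpand s, mul_add]
        _ = C + ∑ s, ρ θ k s * ∑ a, Pol θ (j + 1) s a *
              (r a s - τ * Real.log (Pol θ (j + 1) s a / pibar s a))
            + ∑ s', ρ θ (k + 1) s' * V θ'' j s' := by
            rw [hswap]; ring
  obtain ⟨C, hC⟩ := hA (n - (m' + 1)) le_rfl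
  have hnn : n - (n - (m' + 1)) = m' + 1 := Nat.sub_sub_self hmn
  -- explicit form of the objective
  have hJfun : (fun θ'' : EuclideanSpace ℝ (Fin P) => ∑ s, V θ'' n s)
      = (fun θ'' => C + ∑ s, ρ θ (n - (m' + 1)) s *
      ∑ a, (pibar s a * Real.exp (⟪θ'', ψ a s⟫ / τ) /
          ∑ a', pibar s a' * Real.exp (⟪θ'', ψ a' s⟫ / τ)) *
        (Qstar (m' + 1) a s - τ * Real.log ((pibar s a * Real.exp (⟪θ'', ψ a s⟫ / τ) /
          ∑ a', pibar s a' * Real.exp (⟪θ'', ψ a' s⟫ / τ)) / pibar s a))) := by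
    funext θ''
    rw [hC θ'', hnn]
    congr 1
    refine Finset.sum_congr rfl fun s _ => ?_
    congr 1
    rw [hV]
    refine Finset.sum_congr rfl fun a _ => ?_
    rw [hQm, hPolm]
  -- the Fréchet derivative of the objective at θ
  have hDeriv : HasFDerivAt (fun θ'' : EuclideanSpace ℝ (Fin P) => ∑ s, V θ'' n s)
      (∑ s, ρ θ (n - (m' + 1)) s • ∑ a, (τ⁻¹ * (pibar s a * Real.exp (⟪θ, ψ a s⟫ / τ) /
            ∑ a', pibar s a' * Real.exp (⟪θ, ψ a' s⟫ / τ)) *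
          ((Qstar (m' + 1) a s - ⟪θ, ψ a s⟫) - ∑ b, (pibar s b * Real.exp (⟪θ, ψ b s⟫ / τ) /
            ∑ a', pibar s a' * Real.exp (⟪θ, ψ a' s⟫ / τ)) * (Qstar (m' + 1) b s - ⟪θ, ψ b s⟫)))
         • innerSL ℝ (ψ a s)) θ := by
    rw [hJfun]
    have h0 : HasFDerivAt (fun _ : EuclideanSpace ℝ (Fin P) => C)
        (0 : EuclideanSpace ℝ (Fin P) →L[ℝ] ℝ) θ := hasFDerivAt_const C θ
    have hsum := HasFDerivAt.fun_sum (u := Finset.univ) (fun s (_ : s ∈ Finset.univ) =>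
      (core1 τ hτ (pibar s) (hpibar_pos s) (fun a => Qstar (m' + 1) a s) (fun a => ψ a s) θ
        (fun θ'' => sum_rewrite τ hτ (pibar s) (hpibar_pos s)
          (fun a => Qstar (m' + 1) a s) (fun a => ψ a s) θ'')).const_mul
        (ρ θ (n - (m' + 1)) s))
    simpa using h0.fun_add hsum
  -- the critical-point hypothesis kills the derivative
  have hL0 : (∑ s, ρ θ (n - (m' + 1)) s • ∑ a, (τ⁻¹ * (pibar s a * Real.exp (⟪θ, ψ a s⟫ / τ) /
            ∑ a', pibar s a' * Real.exp (⟪θ, ψ a' s⟫ / τ)) *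
          ((Qstar (m' + 1) a s - ⟪θ, ψ a s⟫) - ∑ b, (pibar s b * Real.exp (⟪θ, ψ b s⟫ / τ) /
            ∑ a', pibar s a' * Real.exp (⟪θ, ψ a' s⟫ / τ)) * (Qstar (m' + 1) b s - ⟪θ, ψ b s⟫)))
         • innerSL ℝ (ψ a s)) = (0 : EuclideanSpace ℝ (Fin P) →L[ℝ] ℝ) := by
    have hgrad := hasFDerivAt_iff_hasGradientAt.mp hDeriv
    have h1 := hgrad.gradient
    rw [hcrit] at h1
    have h2 := congrArg (InnerProductSpace.toDual ℝ (EuclideanSpace ℝ (Fin P))) h1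
    simpa using h2.symm
  have hLv : ∀ v : EuclideanSpace ℝ (Fin P),
      ∑ s, ρ θ (n - (m' + 1)) s * ∑ a, (τ⁻¹ * (pibar s a * Real.exp (⟪θ, ψ a s⟫ / τ) /
            ∑ a', pibar s a' * Real.exp (⟪θ, ψ a' s⟫ / τ)) *
          ((Qstar (m' + 1) a s - ⟪θ, ψ a s⟫) - ∑ b, (pibar s b * Real.exp (⟪θ, ψ b s⟫ / τ) /
            ∑ a', pibar s a' * Real.exp (⟪θ, ψ a' s⟫ / τ)) * (Qstar (m' + 1) b s - ⟪θ, ψ b s⟫)))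
         * ⟪ψ a s, v⟫ = 0 := by
    intro v
    have h := ContinuousLinearMap.ext_iff.mp hL0 v
    rw [ContinuousLinearMap.zero_apply] at h
    rw [← h, ContinuousLinearMap.sum_apply]
    refine Finset.sum_congr rfl fun s _ => ?_
    rw [ContinuousLinearMap.smul_apply, ContinuousLinearMap.sum_apply, smul_eq_mul]
    congr 1
  -- positivity facts
  have hZfpos : ∀ s, 0 < ∑ a', pibar s a' * Real.exp (⟪θ, ψ a' s⟫ / τ) :=
    fun s => Finset.sum_pos (fun a _ => mul_pos (hpibar_pos s a) (Real.exp_pos _))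
      Finset.univ_nonempty
  have hZspos : ∀ s, 0 < ∑ a', pibar s a' * Real.exp (Qstar (m' + 1) a' s / τ) :=
    fun s => Finset.sum_pos (fun a _ => mul_pos (hpibar_pos s a) (Real.exp_pos _))
      Finset.univ_nonempty
  have hpistar_pos : ∀ s a, 0 < pistar (m' + 1) s a := by
    intro s a
    rw [hpistar]
    exact div_pos (mul_pos (hpibar_pos s a) (Real.exp_pos _)) (hZspos s)
  have hpistar_sum : ∀ s, ∑ a, pistar (m' + 1) s a = 1 := by
    intro s
    calc ∑ a, pistar (m' + 1) s a
        = ∑ a, pibar s a * Real.exp (Qstar (m' + 1) a s / τ) /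
            ∑ a', pibar s a' * Real.exp (Qstar (m' + 1) a' s / τ) :=
          Finset.sum_congr rfl fun a _ => hpistar m' s a
      _ = 1 := by rw [← Finset.sum_div, div_self (ne_of_gt (hZspos s))]
  -- the log ratio identity
  have hlogrel : ∀ s a, Real.log (Pol θ (m' + 1) s a / pistar (m' + 1) s a) =
      -((Qstar (m' + 1) a s - ⟪θ, ψ a s⟫) / τ) +
        (Real.log (∑ a', pibar s a' * Real.exp (Qstar (m' + 1) a' s / τ)) -
         Real.log (∑ a', pibar s a' * Real.exp (⟪θ, ψ a' s⟫ / τ))) := by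
    intro s a
    rw [Real.log_div (ne_of_gt (hPol_pos θ (m' + 1) s a)) (ne_of_gt (hpistar_pos s a)),
      hPolm, hpistar,
      Real.log_div (ne_of_gt (mul_pos (hpibar_pos s a) (Real.exp_pos _))) (ne_of_gt (hZfpos s)),
      Real.log_div (ne_of_gt (mul_pos (hpibar_pos s a) (Real.exp_pos _))) (ne_of_gt (hZspos s)),
      Real.log_mul (ne_of_gt (hpibar_pos s a)) (Real.exp_ne_zero _),
      Real.log_mul (ne_of_gt (hpibar_pos s a)) (Real.exp_ne_zero _),
      Real.log_exp, Real.log_exp]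
    ring
  -- express d through the derivative coefficients
  have hd2 : ∀ a s, d (a, s) = -(ρ θ (n - (m' + 1)) s *
      (τ⁻¹ * Pol θ (m' + 1) s a *
        ((Qstar (m' + 1) a s - ⟪θ, ψ a s⟫) -
          ∑ b, Pol θ (m' + 1) s b * (Qstar (m' + 1) b s - ⟪θ, ψ b s⟫)))) := by
    intro a s
    rw [hd]
    simp only [hlogrel]
    have hsplit : ∑ b, Pol θ (m' + 1) s b * (-((Qstar (m' + 1) b s - ⟪θ, ψ b s⟫) / τ) +
          (Real.log (∑ a', pibar s a' * Real.exp (Qstar (m' + 1) a' s / τ)) -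
           Real.log (∑ a', pibar s a' * Real.exp (⟪θ, ψ a' s⟫ / τ))))
        = -((∑ b, Pol θ (m' + 1) s b * (Qstar (m' + 1) b s - ⟪θ, ψ b s⟫)) / τ) +
          (Real.log (∑ a', pibar s a' * Real.exp (Qstar (m' + 1) a' s / τ)) -
           Real.log (∑ a', pibar s a' * Real.exp (⟪θ, ψ a' s⟫ / τ))) := by
      calc ∑ b, Pol θ (m' + 1) s b * (-((Qstar (m' + 1) b s - ⟪θ, ψ b s⟫) / τ) +
            (Real.log (∑ a', pibar s a' * Real.exp (Qstar (m' + 1) a' s / τ)) -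
             Real.log (∑ a', pibar s a' * Real.exp (⟪θ, ψ a' s⟫ / τ))))
          = ∑ b, (-(Pol θ (m' + 1) s b * (Qstar (m' + 1) b s - ⟪θ, ψ b s⟫)) / τ +
              Pol θ (m' + 1) s b *
              (Real.log (∑ a', pibar s a' * Real.exp (Qstar (m' + 1) a' s / τ)) -
               Real.log (∑ a', pibar s a' * Real.exp (⟪θ, ψ a' s⟫ / τ)))) :=
            Finset.sum_congr rfl fun b _ => by ring
        _ = (∑ b, -(Pol θ (m' + 1) s b * (Qstar (m' + 1) b s - ⟪θ, ψ b s⟫))) / τ +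
              (∑ b, Pol θ (m' + 1) s b) *
              (Real.log (∑ a', pibar s a' * Real.exp (Qstar (m' + 1) a' s / τ)) -
               Real.log (∑ a', pibar s a' * Real.exp (⟪θ, ψ a' s⟫ / τ))) := by
            rw [Finset.sum_add_distrib, Finset.sum_div, Finset.sum_mul]
        _ = -((∑ b, Pol θ (m' + 1) s b * (Qstar (m' + 1) b s - ⟪θ, ψ b s⟫)) / τ) +
          (Real.log (∑ a', pibar s a' * Real.exp (Qstar (m' + 1) a' s / τ)) -
           Real.log (∑ a', pibar s a' * Real.exp (⟪θ, ψ a' s⟫ / τ))) := by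
            rw [Finset.sum_neg_distrib, hPol_sum θ (m' + 1) s, one_mul, neg_div]
    rw [hsplit]
    ring
  -- key orthogonality relation
  have hstar : ∀ v : EuclideanSpace ℝ (Fin P),
      ∑ s, ∑ a, d (a, s) * ⟪ψ a s, v⟫ = 0 := by
    intro v
    have h := hLv v
    have h2 : ∀ s, ∑ a, d (a, s) * ⟪ψ a s, v⟫
        = -(ρ θ (n - (m' + 1)) s * ∑ a, (τ⁻¹ * (pibar s a * Real.exp (⟪θ, ψ a s⟫ / τ) /
            ∑ a', pibar s a' * Real.exp (⟪θ, ψ a' s⟫ / τ)) *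
          ((Qstar (m' + 1) a s - ⟪θ, ψ a s⟫) - ∑ b, (pibar s b * Real.exp (⟪θ, ψ b s⟫ / τ) /
            ∑ a', pibar s a' * Real.exp (⟪θ, ψ a' s⟫ / τ)) * (Qstar (m' + 1) b s - ⟪θ, ψ b s⟫)))
          * ⟪ψ a s, v⟫) := by
      intro s
      rw [Finset.mul_sum, ← Finset.sum_neg_distrib]
      refine Finset.sum_congr rfl fun a _ => ?_
      rw [hd2 a s]
      simp only [hPolm θ]
      ring
    rw [Finset.sum_congr rfl fun s _ => h2 s, Finset.sum_neg_distrib, h, neg_zero]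
  -- sums against columns of M vanish
  have hMd : ∀ y : A × S, ∑ x : A × S, d x * M x y = 0 := by
    intro y
    calc ∑ x : A × S, d x * M x y
        = ∑ a, ∑ s, d (a, s) * ⟪ψ a s, ψ y.1 y.2⟫ := by
          rw [Fintype.sum_prod_type]
          exact Finset.sum_congr rfl fun a _ => Finset.sum_congr rfl fun s _ => by
            rw [hM (a, s) y]
      _ = ∑ s, ∑ a, d (a, s) * ⟪ψ a s, ψ y.1 y.2⟫ := Finset.sum_comm
      _ = 0 := hstar _
  have hquad : ∀ e : A × S → ℝ, ∑ x, d x * M.mulVec e x = 0 := by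
    intro e
    calc ∑ x, d x * M.mulVec e x
        = ∑ x, ∑ y, d x * (M x y * e y) := by
          refine Finset.sum_congr rfl fun x _ => ?_
          rw [Matrix.mulVec, dotProduct, Finset.mul_sum]
      _ = ∑ y, ∑ x, d x * (M x y * e y) := Finset.sum_comm
      _ = ∑ y, (∑ x, d x * M x y) * e y := by
          refine Finset.sum_congr rfl fun y _ => ?_
          rw [Finset.sum_mul]
          exact Finset.sum_congr rfl fun x _ => by ring
      _ = 0 := by
          refine Finset.sum_eq_zero fun y _ => ?_
          rw [hMd y, zero_mul]
  constructor
  · -- orthogonality to eigenvectors with positive eigenvalue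
    intro lam e hne heig hlam
    have h1 := hquad e
    rw [heig] at h1
    have h2 : lam * ∑ x, d x * e x = 0 := by
      rw [Finset.mul_sum, ← h1]
      exact Finset.sum_congr rfl fun x _ => by
        simp [Pi.smul_apply, smul_eq_mul]; ring
    exact (mul_eq_zero.mp h2).resolve_left (ne_of_gt hlam)
  · -- positive definite case
    intro hpd hρpos s a
    have hd0 : d = 0 := by
      by_contra hne
      have hq := hpd.dotProduct_mulVec_pos hne
      rw [star_trivial] at hq
      have : d ⬝ᵥ M.mulVec d = 0 := hquad d
      rw [this] at hq
      exact lt_irrefl 0 hq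
    have hKL : ∀ b, Real.log (Pol θ (m' + 1) s b / pistar (m' + 1) s b) =
        ∑ c, Pol θ (m' + 1) s c * Real.log (Pol θ (m' + 1) s c / pistar (m' + 1) s c) := by
      intro b
      have h := congrFun hd0 (b, s)
      rw [Pi.zero_apply, hd] at h
      rcases mul_eq_zero.mp h with h' | h'
      · exact absurd h' (mul_ne_zero (ne_of_gt (hρpos s)) (ne_of_gt (hPol_pos θ (m' + 1) s b)))
      · linarith [sub_eq_zero.mp h']
    have hPe : ∀ b, Pol θ (m' + 1) s b =
        Real.exp (∑ c, Pol θ (m' + 1) s c *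
          Real.log (Pol θ (m' + 1) s c / pistar (m' + 1) s c)) * pistar (m' + 1) s b := by
      intro b
      have h2 : Pol θ (m' + 1) s b / pistar (m' + 1) s b =
          Real.exp (∑ c, Pol θ (m' + 1) s c *
            Real.log (Pol θ (m' + 1) s c / pistar (m' + 1) s c)) := by
        rw [← hKL b]
        exact (Real.exp_log (div_pos (hPol_pos θ (m' + 1) s b) (hpistar_pos s b))).symm
      rw [div_eq_iff (ne_of_gt (hpistar_pos s b))] at h2
      rw [h2]
    have hexpK : Real.exp (∑ c, Pol θ (m' + 1) s c *
        Real.log (Pol θ (m' + 1) s c / pistar (m' + 1) s c)) = 1 := by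
      have hsum1 : (1 : ℝ) = Real.exp (∑ c, Pol θ (m' + 1) s c *
          Real.log (Pol θ (m' + 1) s c / pistar (m' + 1) s c)) * 1 := by
        calc (1 : ℝ) = ∑ b, Pol θ (m' + 1) s b := (hPol_sum θ (m' + 1) s).symm
          _ = ∑ b, Real.exp (∑ c, Pol θ (m' + 1) s c *
                Real.log (Pol θ (m' + 1) s c / pistar (m' + 1) s c)) * pistar (m' + 1) s b :=
              Finset.sum_congr rfl fun b _ => hPe b
          _ = Real.exp (∑ c, Pol θ (m' + 1) s c *
                Real.log (Pol θ (m' + 1) s c / pistar (m' + 1) s c)) *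
                ∑ b, pistar (m' + 1) s b := by rw [Finset.mul_sum]
          _ = _ := by rw [hpistar_sum s]
      linarith
    rw [hPe a, hexpK, one_mul]
end
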